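/- arXiv:2412.11658 — 6 statements merged into one kernel-verified Lean document; each statement's English description precedes it below -/
import Mathlib

section
/- There exists a constant D > 0 (depending only on the dimension d) such that for every unimodular lattice Λ in ℝ^d and every pair of primitive subgroups Λ_1, Λ_2 of Λ, one has ‖Λ_1 ∩ Λ_2‖ · ‖Λ_1 + Λ_2‖ ≤ D · ‖Λ_1‖ · ‖Λ_2‖, where ‖L‖ denotes the sup-norm of the wedge product of a ℤ-basis of L (and ‖{0}‖ = 1). -/
/-- The sup norm of the wedge `v_1 ∧ … ∧ v_k ∈ ∧^k ℝ^d` in the standard basis (maximum of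
the absolute values of the `k × k` minors); for `k = 0` this equals `1`. -/
noncomputable def wedgeNorm {d k : ℕ} (v : Fin k → Fin d → ℝ) : ℝ :=
  ⨆ I : {I : Fin k → Fin d // StrictMono I},
    |(Matrix.of fun p q : Fin k => v q (I.1 p)).det|

/-- `v : Fin k → ℝ^d` is a ℤ-basis of the discrete subgroup `L`. -/
def IsZBasis {d k : ℕ} (v : Fin k → Fin d → ℝ) (L : AddSubgroup (Fin d → ℝ)) : Prop :=
  LinearIndependent ℝ v ∧ AddSubgroup.closure (Set.range v) = L

/-- The covolume-type norm `‖L‖` of a discrete subgroup `L` of `ℝ^d`: the sup norm of the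
wedge of a ℤ-basis of `L` (well defined up to sign, hence the abs; `‖{0}‖ = 1`). -/
noncomputable def latNorm {d : ℕ} (L : AddSubgroup (Fin d → ℝ)) : ℝ :=
  sInf {r : ℝ | ∃ (k : ℕ) (v : Fin k → Fin d → ℝ), IsZBasis v L ∧ r = wedgeNorm v}

/-- `L` is a primitive subgroup of `Λ`, i.e. `L = Λ ∩ span_ℝ(L)`. -/
def IsPrimitiveIn {d : ℕ} (L Λ : AddSubgroup (Fin d → ℝ)) : Prop :=
  L ≤ Λ ∧ (L : Set (Fin d → ℝ)) =
    (Λ : Set (Fin d → ℝ)) ∩ (Submodule.span ℝ (L : Set (Fin d → ℝ)) : Set (Fin d → ℝ))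

/-- `Λ` is a unimodular lattice in `ℝ^d`. -/
def IsUnimodularLattice {d : ℕ} (Λ : AddSubgroup (Fin d → ℝ)) : Prop :=
  ∃ B : Fin d → Fin d → ℝ, |(Matrix.of fun i j => B i j).det| = 1 ∧ IsZBasis B Λ


open Matrix BigOperators Finset

namespace EMMAux

noncomputable instance instFintypeSM (k n : ℕ) : Fintype {I : Fin k → Fin n // StrictMono I} :=
  Fintype.ofFinite _

variable {k n d m p q : ℕ}

lemma step1 (M N : Matrix (Fin k) (Fin n) ℝ) :
    (M * Nᵀ).det = ∑ f : Fin k → Fin n, (M.submatrix id f).det * ∏ i, N i (f i) := by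
  rw [Matrix.det_apply']
  have h1 : ∀ σ : Equiv.Perm (Fin k),
      (∏ i, (M * Nᵀ) (σ i) i) = ∑ f : Fin k → Fin n, ∏ i, (M (σ i) (f i) * N i (f i)) := by
    intro σ
    have : ∀ i, (M * Nᵀ) (σ i) i = ∑ j, M (σ i) j * N i j := by
      intro i; simp [Matrix.mul_apply, Matrix.transpose_apply]
    calc (∏ i, (M * Nᵀ) (σ i) i) = ∏ i, ∑ j, M (σ i) j * N i j := by
          exact Finset.prod_congr rfl fun i _ => this i
      _ = ∑ f ∈ Fintype.piFinset (fun _ : Fin k => (Finset.univ : Finset (Fin n))),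
            ∏ i, M (σ i) (f i) * N i (f i) := Finset.prod_univ_sum _ _
      _ = ∑ f : Fin k → Fin n, ∏ i, (M (σ i) (f i) * N i (f i)) := by
          rw [Fintype.piFinset_univ]
  calc ∑ σ : Equiv.Perm (Fin k), ((Equiv.Perm.sign σ : ℤ) : ℝ) * ∏ i, (M * Nᵀ) (σ i) i
      = ∑ σ : Equiv.Perm (Fin k), ∑ f : Fin k → Fin n,
          ((Equiv.Perm.sign σ : ℤ) : ℝ) * ((∏ i, M (σ i) (f i)) * ∏ i, N i (f i)) := by
        refine Finset.sum_congr rfl fun σ _ => ?_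
        rw [h1 σ, Finset.mul_sum]
        refine Finset.sum_congr rfl fun f _ => ?_
        rw [Finset.prod_mul_distrib]
    _ = ∑ f : Fin k → Fin n, ∑ σ : Equiv.Perm (Fin k),
          ((Equiv.Perm.sign σ : ℤ) : ℝ) * ((∏ i, M (σ i) (f i)) * ∏ i, N i (f i)) :=
        Finset.sum_comm
    _ = ∑ f : Fin k → Fin n, (M.submatrix id f).det * ∏ i, N i (f i) := by
        refine Finset.sum_congr rfl fun f _ => ?_
        rw [Matrix.det_apply', Finset.sum_mul]
        refine Finset.sum_congr rfl fun σ _ => ?_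
        simp [Matrix.submatrix_apply, mul_assoc]


noncomputable def sortedOf {f : Fin k → Fin n} (hf : Function.Injective f) :
    {I : Fin k → Fin n // StrictMono I} :=
  ⟨(Finset.univ.image f).orderEmbOfFin
      (by rw [Finset.card_image_of_injective _ hf, Finset.card_univ, Fintype.card_fin]),
   ((Finset.univ.image f).orderEmbOfFin _).strictMono⟩

lemma sortedOf_exists {f : Fin k → Fin n} (hf : Function.Injective f) (i : Fin k) :
    ∃ l, (sortedOf hf).1 l = f i := by
  have h1 : f i ∈ (Finset.univ.image f : Finset (Fin n)) := by simp
  have h2 : (f i) ∈ Set.range ((Finset.univ.image f).orderEmbOfFin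
      (by rw [Finset.card_image_of_injective _ hf, Finset.card_univ, Fintype.card_fin] :
        (Finset.univ.image f).card = k)) := by
    rw [Finset.range_orderEmbOfFin]; exact_mod_cast h1
  exact h2

noncomputable def permOf {f : Fin k → Fin n} (hf : Function.Injective f) :
    Equiv.Perm (Fin k) :=
  Equiv.ofBijective (fun i => Classical.choose (sortedOf_exists hf i))
    (Finite.injective_iff_bijective.mp (by
      intro a b hab
      have ha := Classical.choose_spec (sortedOf_exists hf a)
      have hb := Classical.choose_spec (sortedOf_exists hf b)
      apply hf
      rw [← ha, ← hb]
      exact congrArg _ hab))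

lemma sortedOf_permOf {f : Fin k → Fin n} (hf : Function.Injective f) (i : Fin k) :
    (sortedOf hf).1 (permOf hf i) = f i :=
  Classical.choose_spec (sortedOf_exists hf i)

theorem cauchy_binet (M : Matrix (Fin k) (Fin n) ℝ) :
    (M * Mᵀ).det = ∑ I : {I : Fin k → Fin n // StrictMono I}, ((M.submatrix id I.1).det) ^ 2 := by
  classical
  rw [step1 M M]
  rw [← Finset.sum_filter_add_sum_filter_not Finset.univ (fun f => Function.Injective f)]
  have hnot : ∑ f ∈ Finset.univ.filter (fun f => ¬ Function.Injective f),
      (M.submatrix id f).det * ∏ i, M i (f i) = 0 := by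
    refine Finset.sum_eq_zero fun f hf => ?_
    rw [Finset.mem_filter] at hf
    obtain ⟨a, b, hab, hne⟩ : ∃ a b, f a = f b ∧ a ≠ b := by
      by_contra h
      push_neg at h
      exact hf.2 fun a b hab => h a b hab
    rw [Matrix.det_zero_of_column_eq hne (fun l => by rw [Matrix.submatrix_apply,
      Matrix.submatrix_apply, hab]), zero_mul]
  rw [hnot, add_zero]
  have key : ∑ f ∈ Finset.univ.filter (fun f : Fin k → Fin n => Function.Injective f),
      (M.submatrix id f).det * ∏ i, M i (f i)
      = ∑ p : {I : Fin k → Fin n // StrictMono I} × Equiv.Perm (Fin k),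
          (((Equiv.Perm.sign p.2 : ℤ) : ℝ) * (M.submatrix id p.1.1).det)
            * ∏ i, M i (p.1.1 (p.2 i)) := by
    refine Finset.sum_bij'
      (i := fun f hf => (sortedOf (Finset.mem_filter.mp hf).2, permOf (Finset.mem_filter.mp hf).2))
      (j := fun p _ => p.1.1 ∘ p.2) (fun f hf => Finset.mem_univ _)
      (fun p hp => Finset.mem_filter.mpr ⟨Finset.mem_univ _, p.1.2.injective.comp p.2.injective⟩)
      (fun f hf => funext fun i => sortedOf_permOf (Finset.mem_filter.mp hf).2 i)
      (fun p hp => ?_) (fun f hf => ?_)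
    · -- right inverse
      set hinj : Function.Injective (p.1.1 ∘ p.2) :=
        p.1.2.injective.comp p.2.injective with hinjdef
      have himg : Finset.univ.image (p.1.1 ∘ p.2) = Finset.univ.image p.1.1 := by
        ext x
        simp only [Finset.mem_image, Finset.mem_univ, true_and, Function.comp_apply]
        constructor
        · rintro ⟨a, rfl⟩; exact ⟨p.2 a, rfl⟩
        · rintro ⟨a, rfl⟩; exact ⟨p.2.symm a, by simp⟩
      have hI : p.1.1 = ((sortedOf hinj).1 : Fin k → Fin n) := by
        refine Finset.orderEmbOfFin_unique _ ?_ p.1.2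
        intro i
        rw [himg]
        exact Finset.mem_image.mpr ⟨i, Finset.mem_univ _, rfl⟩
      have hσ : ∀ i, permOf hinj i = p.2 i := by
        intro i
        have h1 := sortedOf_permOf hinj i
        have h2 : (sortedOf hinj).1 (p.2 i) = (p.1.1 ∘ p.2) i := by
          rw [← hI]; rfl
        exact (sortedOf hinj).2.injective (h1.trans h2.symm)
      refine Prod.ext ?_ ?_
      · exact Subtype.ext hI.symm
      · exact Equiv.ext fun i => hσ i
    · -- values
      set hinj := (Finset.mem_filter.mp hf).2
      have hfeq : ∀ i, f i = (sortedOf hinj).1 (permOf hinj i) :=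
        fun i => (sortedOf_permOf hinj i).symm
      have hdet : (M.submatrix id f).det
          = ((Equiv.Perm.sign (permOf hinj) : ℤ) : ℝ) * (M.submatrix id (sortedOf hinj).1).det := by
        have hcomp : ((sortedOf hinj).1 ∘ ⇑(permOf hinj)) = f :=
          funext fun i => sortedOf_permOf hinj i
        have : M.submatrix id f
            = (M.submatrix id (sortedOf hinj).1).submatrix id (permOf hinj) := by
          rw [Matrix.submatrix_submatrix, hcomp]
          rfl
        rw [this, Matrix.det_permute']
      rw [hdet]
      congr 1
      exact Finset.prod_congr rfl fun i _ => by rw [hfeq i]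
  rw [key, Fintype.sum_prod_type]
  refine Finset.sum_congr rfl fun I _ => ?_
  have : ∀ σ : Equiv.Perm (Fin k), (∏ i, M i (I.1 (σ i)))
      = ∏ i, ((M.submatrix id I.1)ᵀ) (σ i) i := by
    intro σ; exact Finset.prod_congr rfl fun i _ => rfl
  calc ∑ σ : Equiv.Perm (Fin k), (((Equiv.Perm.sign σ : ℤ) : ℝ) * (M.submatrix id I.1).det)
        * ∏ i, M i (I.1 (σ i))
      = (M.submatrix id I.1).det * ∑ σ : Equiv.Perm (Fin k),
          ((Equiv.Perm.sign σ : ℤ) : ℝ) * ∏ i, ((M.submatrix id I.1)ᵀ) (σ i) i := by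
        rw [Finset.mul_sum]
        exact Finset.sum_congr rfl fun σ _ => by rw [this σ]; ring
    _ = (M.submatrix id I.1).det * ((M.submatrix id I.1)ᵀ).det := by
        congr 1
        exact (Matrix.det_apply' _).symm
    _ = ((M.submatrix id I.1).det) ^ 2 := by rw [Matrix.det_transpose]; ring

/-- Gram determinant of a family of vectors. -/
noncomputable def gdet (v : Fin k → Fin d → ℝ) : ℝ := (Matrix.of v * (Matrix.of v)ᵀ).det

lemma gdet_eq_sum_sq (v : Fin k → Fin d → ℝ) :
    gdet v = ∑ I : {I : Fin k → Fin d // StrictMono I}, (((Matrix.of v).submatrix id I.1).det) ^ 2 :=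
  cauchy_binet _

lemma gdet_nonneg (v : Fin k → Fin d → ℝ) : 0 ≤ gdet v := by
  rw [gdet_eq_sum_sq]; exact Finset.sum_nonneg fun I _ => sq_nonneg _

lemma wedgeNorm_eq (v : Fin k → Fin d → ℝ) :
    wedgeNorm v = ⨆ I : {I : Fin k → Fin d // StrictMono I}, |((Matrix.of v).submatrix id I.1).det| := by
  unfold wedgeNorm
  congr 1
  funext I
  rw [← Matrix.det_transpose]
  congr 1

lemma abs_minor_le_wedgeNorm (v : Fin k → Fin d → ℝ) (I : {I : Fin k → Fin d // StrictMono I}) :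
    |((Matrix.of v).submatrix id I.1).det| ≤ wedgeNorm v := by
  rw [wedgeNorm_eq]
  exact le_ciSup (f := fun J : {I : Fin k → Fin d // StrictMono I} =>
    |((Matrix.of v).submatrix id J.1).det|) (Set.Finite.bddAbove (Set.finite_range _)) I

lemma wedgeNorm_nonneg (v : Fin k → Fin d → ℝ) : 0 ≤ wedgeNorm v := by
  rcases isEmpty_or_nonempty {I : Fin k → Fin d // StrictMono I} with h | h
  · rw [wedgeNorm_eq, Real.iSup_of_isEmpty]
  · obtain ⟨I⟩ := h
    exact le_trans (abs_nonneg _) (abs_minor_le_wedgeNorm v I)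

lemma wedgeNorm_le (v : Fin k → Fin d → ℝ) {c : ℝ} (hc : 0 ≤ c)
    (h : ∀ I : {I : Fin k → Fin d // StrictMono I}, |((Matrix.of v).submatrix id I.1).det| ≤ c) :
    wedgeNorm v ≤ c := by
  rw [wedgeNorm_eq]; exact Real.iSup_le h hc

lemma sq_wedgeNorm_le_gdet (v : Fin k → Fin d → ℝ) : wedgeNorm v ^ 2 ≤ gdet v := by
  have h1 : wedgeNorm v ≤ Real.sqrt (gdet v) := by
    refine wedgeNorm_le v (Real.sqrt_nonneg _) fun I => ?_
    rw [← Real.sqrt_sq_eq_abs]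
    refine Real.sqrt_le_sqrt ?_
    rw [gdet_eq_sum_sq]
    exact Finset.single_le_sum (f := fun J : {I : Fin k → Fin d // StrictMono I} =>
      (((Matrix.of v).submatrix id J.1).det) ^ 2) (fun J _ => sq_nonneg _) (Finset.mem_univ I)
  calc wedgeNorm v ^ 2 ≤ Real.sqrt (gdet v) ^ 2 :=
        pow_le_pow_left₀ (wedgeNorm_nonneg v) h1 2
    _ = gdet v := Real.sq_sqrt (gdet_nonneg v)

lemma gdet_le_card_mul_sq_wedgeNorm (v : Fin k → Fin d → ℝ) :
    gdet v ≤ (Fintype.card {I : Fin k → Fin d // StrictMono I} : ℝ) * wedgeNorm v ^ 2 := by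
  rw [gdet_eq_sum_sq]
  calc ∑ I : {I : Fin k → Fin d // StrictMono I}, (((Matrix.of v).submatrix id I.1).det) ^ 2
      ≤ ∑ _I : {I : Fin k → Fin d // StrictMono I}, wedgeNorm v ^ 2 := by
        refine Finset.sum_le_sum fun I _ => ?_
        rw [← sq_abs]
        exact pow_le_pow_left₀ (abs_nonneg _) (abs_minor_le_wedgeNorm v I) 2
    _ = _ := by rw [Finset.sum_const, Finset.card_univ, nsmul_eq_mul]

lemma cardSM_le (hd : 0 < d) (h : Nonempty {I : Fin k → Fin d // StrictMono I} → k ≤ d) :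
    (Fintype.card {I : Fin k → Fin d // StrictMono I} : ℝ) ≤ (d : ℝ) ^ d := by
  rcases isEmpty_or_nonempty {I : Fin k → Fin d // StrictMono I} with hI | hI
  · simp only [Fintype.card_eq_zero, Nat.cast_zero]
    positivity
  · have h1 : Fintype.card {I : Fin k → Fin d // StrictMono I} ≤ Fintype.card (Fin k → Fin d) :=
      Fintype.card_le_of_injective (fun I => I.1) Subtype.val_injective
    have h2 : Fintype.card (Fin k → Fin d) = d ^ k := by
      rw [Fintype.card_fun, Fintype.card_fin, Fintype.card_fin]
    have h3 : d ^ k ≤ d ^ d := Nat.pow_le_pow_right hd (h hI)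
    calc (Fintype.card {I : Fin k → Fin d // StrictMono I} : ℝ)
        ≤ ((d ^ k : ℕ) : ℝ) := by exact_mod_cast h1.trans_eq h2
      _ ≤ ((d ^ d : ℕ) : ℝ) := by exact_mod_cast h3
      _ = (d : ℝ) ^ d := by push_cast; ring

/-- the family obtained by acting with a square matrix on a family of vectors -/
def tmul (U : Matrix (Fin k) (Fin k) ℝ) (v : Fin k → Fin d → ℝ) : Fin k → Fin d → ℝ :=
  fun i j => ∑ l, U i l * v l j

lemma of_tmul (U : Matrix (Fin k) (Fin k) ℝ) (v : Fin k → Fin d → ℝ) :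
    Matrix.of (tmul U v) = U * Matrix.of v := by
  ext i j; simp [tmul, Matrix.mul_apply]

lemma tmul_one (v : Fin k → Fin d → ℝ) : tmul 1 v = v := by
  funext i j
  simp [tmul, Matrix.one_apply, Finset.sum_ite_eq]

lemma wedgeNorm_tmul {U : Matrix (Fin k) (Fin k) ℝ} (hU : |U.det| = 1) (v : Fin k → Fin d → ℝ) :
    wedgeNorm (tmul U v) = wedgeNorm v := by
  rw [wedgeNorm_eq, wedgeNorm_eq]
  congr 1
  funext I
  have h1 : (Matrix.of (tmul U v)).submatrix id I.1 = U * ((Matrix.of v).submatrix id I.1) := by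
    ext i j
    simp [tmul, Matrix.mul_apply, Matrix.submatrix_apply]
  rw [h1, Matrix.det_mul, abs_mul, hU, one_mul]

/-- block lower-triangular matrix acting on appended families -/
noncomputable def blockMat (P : Matrix (Fin m) (Fin m) ℝ) (C : Matrix (Fin p) (Fin m) ℝ) :
    Matrix (Fin (m + p)) (Fin (m + p)) ℝ :=
  (Matrix.fromBlocks P 0 C 1).submatrix finSumFinEquiv.symm finSumFinEquiv.symm

lemma abs_det_blockMat (P : Matrix (Fin m) (Fin m) ℝ) (C : Matrix (Fin p) (Fin m) ℝ) :
    |(blockMat P C).det| = |P.det| := by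
  unfold blockMat
  rw [Matrix.det_submatrix_equiv_self, Matrix.det_fromBlocks_zero₁₂, Matrix.det_one, mul_one]

lemma tmul_blockMat (P : Matrix (Fin m) (Fin m) ℝ) (C : Matrix (Fin p) (Fin m) ℝ)
    (u : Fin m → Fin d → ℝ) (x : Fin p → Fin d → ℝ) :
    tmul (blockMat P C) (Fin.append u x)
      = Fin.append (tmul P u) (fun i j => x i j + ∑ l, C i l * u l j) := by
  funext i j
  have hsum : ∀ i : Fin (m + p), tmul (blockMat P C) (Fin.append u x) i j
      = (∑ l : Fin m, (Matrix.fromBlocks P (0 : Matrix (Fin m) (Fin p) ℝ) C 1)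
            (finSumFinEquiv.symm i) (Sum.inl l) * u l j)
        + ∑ l : Fin p, (Matrix.fromBlocks P (0 : Matrix (Fin m) (Fin p) ℝ) C 1)
            (finSumFinEquiv.symm i) (Sum.inr l) * x l j := by
    intro i
    show (∑ l : Fin (m+p), blockMat P C i l * Fin.append u x l j) = _
    rw [← Equiv.sum_comp finSumFinEquiv
      (fun l => blockMat P C i l * Fin.append u x l j), Fintype.sum_sum_type]
    congr 1
    · refine Finset.sum_congr rfl fun l _ => ?_
      rw [blockMat]
      simp only [Matrix.submatrix_apply, Equiv.symm_apply_apply, finSumFinEquiv_apply_left,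
        finSumFinEquiv_symm_apply_castAdd]
      rw [Fin.append_left]
    · refine Finset.sum_congr rfl fun l _ => ?_
      rw [blockMat]
      simp only [Matrix.submatrix_apply, Equiv.symm_apply_apply, finSumFinEquiv_apply_right,
        finSumFinEquiv_symm_apply_natAdd]
      rw [Fin.append_right]
  refine Fin.addCases (fun i₀ => ?_) (fun i₀ => ?_) i
  · rw [hsum, Fin.append_left, finSumFinEquiv_symm_apply_castAdd]
    simp only [Matrix.fromBlocks_apply₁₁, Matrix.fromBlocks_apply₁₂, Matrix.zero_apply,
      zero_mul, Finset.sum_const_zero, add_zero]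
    rfl
  · rw [hsum, Fin.append_right, finSumFinEquiv_symm_apply_natAdd]
    simp only [Matrix.fromBlocks_apply₂₁, Matrix.fromBlocks_apply₂₂, Matrix.one_apply]
    rw [add_comm]
    congr 1
    simp [ite_mul, Finset.sum_ite_eq]

/-- shearing the second block does not change the wedge norm -/
lemma wedgeNorm_shear (u : Fin m → Fin d → ℝ) (x : Fin p → Fin d → ℝ)
    (C : Matrix (Fin p) (Fin m) ℝ) :
    wedgeNorm (Fin.append u (fun i j => x i j - ∑ l, C i l * u l j))
      = wedgeNorm (Fin.append u x) := by
  have h := wedgeNorm_tmul (U := blockMat 1 (-C)) (by rw [abs_det_blockMat, Matrix.det_one, abs_one])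
    (Fin.append u x)
  rw [tmul_blockMat, tmul_one] at h
  have hfam : (fun i j => x i j + ∑ l, (-C) i l * u l j)
      = fun i j => x i j - ∑ l, C i l * u l j := by
    funext i j
    simp [sub_eq_add_neg, neg_mul, Finset.sum_neg_distrib]
  rw [hfam] at h
  exact h

/-- multiplying the first block by a unimodular matrix does not change the wedge norm -/
lemma wedgeNorm_first {V : Matrix (Fin m) (Fin m) ℝ} (hV : |V.det| = 1)
    (u : Fin m → Fin d → ℝ) (x : Fin p → Fin d → ℝ) :
    wedgeNorm (Fin.append (tmul V u) x) = wedgeNorm (Fin.append u x) := by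
  have h := wedgeNorm_tmul (U := blockMat V (0 : Matrix (Fin p) (Fin m) ℝ))
    (by rw [abs_det_blockMat]; exact hV) (Fin.append u x)
  rw [tmul_blockMat] at h
  have hfam : (fun i j => x i j + ∑ l, (0 : Matrix (Fin p) (Fin m) ℝ) i l * u l j) = x := by
    funext i j; simp
  rw [hfam] at h
  exact h

/-- Gram determinant of an appended family with orthogonal blocks -/
lemma gdet_append_orth (u : Fin m → Fin d → ℝ) (x : Fin p → Fin d → ℝ)
    (h : Matrix.of u * (Matrix.of x)ᵀ = 0) :
    gdet (Fin.append u x) = gdet u * gdet x := by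
  unfold gdet
  rw [← Matrix.det_submatrix_equiv_self finSumFinEquiv]
  have hblock : (Matrix.of (Fin.append u x) * (Matrix.of (Fin.append u x))ᵀ).submatrix
      finSumFinEquiv finSumFinEquiv
      = Matrix.fromBlocks (Matrix.of u * (Matrix.of u)ᵀ) 0 0 (Matrix.of x * (Matrix.of x)ᵀ) := by
    ext i j
    rcases i with i | i <;> rcases j with j | j <;>
      simp only [Matrix.submatrix_apply, finSumFinEquiv_apply_left, finSumFinEquiv_apply_right,
        Matrix.fromBlocks_apply₁₁, Matrix.fromBlocks_apply₁₂, Matrix.fromBlocks_apply₂₁,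
        Matrix.fromBlocks_apply₂₂, Matrix.mul_apply, Matrix.transpose_apply, Matrix.of_apply,
        Matrix.zero_apply]
    · exact Finset.sum_congr rfl fun c _ => by rw [Fin.append_left, Fin.append_left]
    · have := congrFun (congrFun h i) j
      simp only [Matrix.mul_apply, Matrix.transpose_apply, Matrix.of_apply,
        Matrix.zero_apply] at this
      rw [← this]
      exact Finset.sum_congr rfl fun c _ => by rw [Fin.append_left, Fin.append_right]
    · have := congrFun (congrFun h j) i
      simp only [Matrix.mul_apply, Matrix.transpose_apply, Matrix.of_apply,
        Matrix.zero_apply] at this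
      rw [← this]
      exact Finset.sum_congr rfl fun c _ => by
        rw [Fin.append_right, Fin.append_left, mul_comm]
    · exact Finset.sum_congr rfl fun c _ => by rw [Fin.append_right, Fin.append_right]
  rw [hblock, Matrix.det_fromBlocks_zero₁₂]

/-- orthogonal projection coefficients exist -/
lemma exists_proj (u : Fin m → Fin d → ℝ) (hu : LinearIndependent ℝ u)
    (x : Fin p → Fin d → ℝ) :
    ∃ C : Matrix (Fin p) (Fin m) ℝ,
      (Matrix.of x - C * Matrix.of u) * (Matrix.of u)ᵀ = 0 := by
  classical
  set G : Matrix (Fin m) (Fin m) ℝ := Matrix.of u * (Matrix.of u)ᵀ with hG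
  have hpos : G.PosDef := by
    refine Matrix.PosDef.of_dotProduct_mulVec_pos ?_ ?_
    · have := Matrix.isHermitian_mul_conjTranspose_self (Matrix.of u)
      rwa [Matrix.conjTranspose_eq_transpose_of_trivial] at this
    · intro y hy
      have hz : ∀ z : Fin m → ℝ, dotProduct z (G *ᵥ z)
          = dotProduct (z ᵥ* Matrix.of u) (z ᵥ* Matrix.of u) := by
        intro z
        rw [hG, ← Matrix.mulVec_mulVec, ← Matrix.dotProduct_mulVec, Matrix.mulVec_transpose]
      have hzy : (y ᵥ* Matrix.of u) ≠ 0 := by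
        intro h0
        apply hy
        have hli := Fintype.linearIndependent_iff.mp hu y ?_
        · funext i; exact hli i
        · funext j
          have := congrFun h0 j
          simpa [Matrix.vecMul, dotProduct] using this
      have h1 : 0 ≤ dotProduct (y ᵥ* Matrix.of u) (y ᵥ* Matrix.of u) :=
        Finset.sum_nonneg fun j _ => mul_self_nonneg _
      have h2 : dotProduct (y ᵥ* Matrix.of u) (y ᵥ* Matrix.of u) ≠ 0 :=
        fun h0 => hzy (dotProduct_self_eq_zero.mp h0)
      have : star y = y := by simp
      rw [this, hz y]
      exact lt_of_le_of_ne h1 (Ne.symm h2)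
  have hdet : IsUnit G.det := isUnit_iff_ne_zero.mpr (ne_of_gt hpos.det_pos)
  refine ⟨(Matrix.of x * (Matrix.of u)ᵀ) * G⁻¹, ?_⟩
  rw [Matrix.sub_mul, Matrix.mul_assoc, ← hG, Matrix.mul_assoc, Matrix.nonsing_inv_mul _ hdet,
    Matrix.mul_one, sub_self]

/-- Fischer-type inequality via Cauchy–Binet -/
lemma gdet_le_gdet_add_orth (b' r : Fin q → Fin d → ℝ)
    (h : Matrix.of b' * (Matrix.of r)ᵀ = 0) :
    gdet b' ≤ gdet (fun i => b' i + r i) := by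
  classical
  -- the (q × (d+d)) matrix with rows (b' i, r i)
  set P : Matrix (Fin q) (Fin (d + d)) ℝ := Matrix.of (fun i => Fin.append (b' i) (r i)) with hP
  have hPP : P * Pᵀ = Matrix.of (fun i => b' i + r i) * (Matrix.of (fun i => b' i + r i))ᵀ := by
    ext i j
    simp only [Matrix.mul_apply, Matrix.transpose_apply, Matrix.of_apply, hP, Pi.add_apply]
    rw [Fin.sum_univ_add]
    have h0 := congrFun (congrFun h i) j
    have h0' := congrFun (congrFun h j) i
    simp only [Matrix.mul_apply, Matrix.transpose_apply, Matrix.of_apply,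
      Matrix.zero_apply] at h0 h0'
    have hexp : ∀ c, (b' i c + r i c) * (b' j c + r j c)
        = b' i c * b' j c + r i c * r j c + (b' i c * r j c + b' j c * r i c) := by
      intro c; ring
    calc (∑ c : Fin d, Fin.append (b' i) (r i) (Fin.castAdd d c) * Fin.append (b' j) (r j) (Fin.castAdd d c))
          + ∑ c : Fin d, Fin.append (b' i) (r i) (Fin.natAdd d c) * Fin.append (b' j) (r j) (Fin.natAdd d c)
        = (∑ c, b' i c * b' j c) + ∑ c, r i c * r j c := by
          congr 1
          · exact Finset.sum_congr rfl fun c _ => by rw [Fin.append_left, Fin.append_left]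
          · exact Finset.sum_congr rfl fun c _ => by rw [Fin.append_right, Fin.append_right]
      _ = ∑ c, (b' i c + r i c) * (b' j c + r j c) := by
          have hsplit : ∑ c, (b' i c + r i c) * (b' j c + r j c)
              = ((∑ c, b' i c * b' j c) + ∑ c, r i c * r j c)
                + ((∑ c, b' i c * r j c) + ∑ c, b' j c * r i c) := by
            rw [← Finset.sum_add_distrib, ← Finset.sum_add_distrib, ← Finset.sum_add_distrib]
            exact Finset.sum_congr rfl fun c _ => by ring
          rw [hsplit, h0, h0']
          ring
  have hCB1 : gdet (fun i => b' i + r i) = ∑ J : {J : Fin q → Fin (d + d) // StrictMono J},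
      ((P.submatrix id J.1).det) ^ 2 := by
    rw [gdet, ← hPP]
    exact cauchy_binet P
  -- embed the strictly monotone maps into `Fin d` into those into `Fin (d+d)`
  set e : {I : Fin q → Fin d // StrictMono I} ↪ {J : Fin q → Fin (d + d) // StrictMono J} :=
    ⟨fun I => ⟨fun i => Fin.castAdd d (I.1 i), (Fin.strictMono_castAdd d).comp I.2⟩,
      by
        intro I I' hII
        apply Subtype.ext
        funext i
        have := congrFun (congrArg (fun f => f.1) hII) i
        exact (Fin.strictMono_castAdd d).injective this⟩ with he
  have hsub : ∀ I : {I : Fin q → Fin d // StrictMono I},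
      P.submatrix id (e I).1 = (Matrix.of b').submatrix id I.1 := by
    intro I
    ext i j
    show P i (Fin.castAdd d (I.1 j)) = b' i (I.1 j)
    rw [hP]
    exact Fin.append_left _ _ _
  have hCB0 : gdet b' = ∑ I : {I : Fin q → Fin d // StrictMono I},
      (((Matrix.of b').submatrix id I.1).det) ^ 2 := gdet_eq_sum_sq b'
  rw [hCB0, hCB1]
  have hle := Finset.sum_le_sum_of_subset_of_nonneg (Finset.subset_univ (Finset.univ.map e))
    (fun J _ _ => sq_nonneg ((P.submatrix id J.1).det))
  rw [Finset.sum_map] at hle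
  refine le_trans (le_of_eq ?_) hle
  exact Finset.sum_congr rfl fun I _ => by rw [hsub I]

lemma li_append_left {u : Fin m → Fin d → ℝ} {x : Fin p → Fin d → ℝ}
    (H : LinearIndependent ℝ (Fin.append u x)) : LinearIndependent ℝ u := by
  have h : u = (Fin.append u x) ∘ (Fin.castAdd p) := funext fun i => (Fin.append_left u x i).symm
  rw [h]
  exact H.comp _ (Fin.strictMono_castAdd p).injective

lemma li_card_le {v : Fin k → Fin d → ℝ} (H : LinearIndependent ℝ v) : k ≤ d := by
  have := H.fintype_card_le_finrank
  rwa [Fintype.card_fin, Module.finrank_fin_fun] at this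

/-- the key analytic inequality -/
theorem analytic_ineq (hd : 0 < d) (w : Fin m → Fin d → ℝ) (a : Fin p → Fin d → ℝ)
    (b : Fin q → Fin d → ℝ)
    (Hwa : LinearIndependent ℝ (Fin.append w a))
    (Hw : LinearIndependent ℝ w) :
    wedgeNorm w * wedgeNorm (Fin.append (Fin.append w a) b)
      ≤ (d : ℝ) ^ d * (wedgeNorm (Fin.append w a) * wedgeNorm (Fin.append w b)) := by
  obtain ⟨C₂, hC₂⟩ := exists_proj (Fin.append w a) Hwa b
  obtain ⟨C₁, hC₁⟩ := exists_proj w Hw a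
  obtain ⟨C₃, hC₃⟩ := exists_proj w Hw b
  set wa := Fin.append w a with hwa
  set b2 : Fin q → Fin d → ℝ := fun i j => b i j - ∑ l, C₂ i l * wa l j with hb2
  set a1 : Fin p → Fin d → ℝ := fun i j => a i j - ∑ l, C₁ i l * w l j with ha1
  set b1 : Fin q → Fin d → ℝ := fun i j => b i j - ∑ l, C₃ i l * w l j with hb1
  have hofb2 : Matrix.of b2 = Matrix.of b - C₂ * Matrix.of wa := by
    ext i j; simp [hb2, Matrix.mul_apply]
  have hofa1 : Matrix.of a1 = Matrix.of a - C₁ * Matrix.of w := by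
    ext i j; simp [ha1, Matrix.mul_apply]
  have hofb1 : Matrix.of b1 = Matrix.of b - C₃ * Matrix.of w := by
    ext i j; simp [hb1, Matrix.mul_apply]
  have horth2 : Matrix.of b2 * (Matrix.of wa)ᵀ = 0 := by rw [hofb2]; exact hC₂
  have horth1 : Matrix.of a1 * (Matrix.of w)ᵀ = 0 := by rw [hofa1]; exact hC₁
  have horth3 : Matrix.of b1 * (Matrix.of w)ᵀ = 0 := by rw [hofb1]; exact hC₃
  -- wedgeNorm equalities
  have E1 : wedgeNorm (Fin.append wa b2) = wedgeNorm (Fin.append wa b) :=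
    wedgeNorm_shear wa b C₂
  have haction : tmul (blockMat 1 (-C₁)) wa = Fin.append w a1 := by
    rw [hwa, tmul_blockMat, tmul_one]
    congr 1
    funext i j
    simp [ha1, sub_eq_add_neg, neg_mul, Finset.sum_neg_distrib]
  have E2 : wedgeNorm (Fin.append (Fin.append w a1) b2) = wedgeNorm (Fin.append wa b2) := by
    rw [← haction]
    exact wedgeNorm_first (by rw [abs_det_blockMat, Matrix.det_one, abs_one]) wa b2
  have E3 : wedgeNorm (Fin.append w a1) = wedgeNorm wa := wedgeNorm_shear w a C₁
  have E4 : wedgeNorm (Fin.append w b1) = wedgeNorm (Fin.append w b) := wedgeNorm_shear w b C₃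
  -- orthogonality of b2 with w-rows
  have hb2w : Matrix.of b2 * (Matrix.of w)ᵀ = 0 := by
    ext i j
    have h0 := congrFun (congrFun horth2 i) (Fin.castAdd p j)
    simp only [Matrix.mul_apply, Matrix.transpose_apply, Matrix.of_apply, Matrix.zero_apply]
      at h0 ⊢
    rw [← h0]
    exact Finset.sum_congr rfl fun c _ => by rw [hwa, Fin.append_left]
  -- orthogonality of b2 with a1-rows
  have hb2a1 : Matrix.of (Fin.append w a1) * (Matrix.of b2)ᵀ = 0 := by
    have h1 : Matrix.of (Fin.append w a1) = blockMat 1 (-C₁) * Matrix.of wa := by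
      rw [← haction, of_tmul]
    have h2 : Matrix.of wa * (Matrix.of b2)ᵀ = 0 := by
      have := congrArg Matrix.transpose horth2
      rwa [Matrix.transpose_mul, Matrix.transpose_transpose, Matrix.transpose_zero] at this
    rw [h1, Matrix.mul_assoc, h2, Matrix.mul_zero]
  -- Gram factorizations
  have G1 : gdet (Fin.append (Fin.append w a1) b2) = gdet (Fin.append w a1) * gdet b2 :=
    gdet_append_orth _ _ hb2a1
  have G2 : gdet (Fin.append w a1) = gdet w * gdet a1 := by
    refine gdet_append_orth _ _ ?_
    have := congrArg Matrix.transpose horth1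
    rwa [Matrix.transpose_mul, Matrix.transpose_transpose, Matrix.transpose_zero] at this
  have G3 : gdet (Fin.append w b1) = gdet w * gdet b1 := by
    refine gdet_append_orth _ _ ?_
    have := congrArg Matrix.transpose horth3
    rwa [Matrix.transpose_mul, Matrix.transpose_transpose, Matrix.transpose_zero] at this
  -- Fischer: gdet b2 ≤ gdet b1
  have G4 : gdet b2 ≤ gdet b1 := by
    set ρ : Fin q → Fin d → ℝ := fun i j => (∑ l, C₂ i l * wa l j) - ∑ l, C₃ i l * w l j with hρ
    have hofρ : Matrix.of ρ = C₂ * Matrix.of wa - C₃ * Matrix.of w := by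
      ext i j; simp [hρ, Matrix.mul_apply]
    have horthρ : Matrix.of b2 * (Matrix.of ρ)ᵀ = 0 := by
      rw [hofρ, Matrix.transpose_sub, Matrix.mul_sub, Matrix.transpose_mul,
        Matrix.transpose_mul, ← Matrix.mul_assoc, ← Matrix.mul_assoc, horth2, hb2w,
        Matrix.zero_mul, Matrix.zero_mul, sub_self]
    have hsum : (fun i => b2 i + ρ i) = b1 := by
      funext i j
      simp only [Pi.add_apply, hb2, hρ, hb1]
      ring
    have := gdet_le_gdet_add_orth b2 ρ horthρ
    rwa [hsum] at this
  -- cardinality bounds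
  have hcard1 : (Fintype.card {I : Fin (m + p) → Fin d // StrictMono I} : ℝ) ≤ (d : ℝ) ^ d := by
    refine cardSM_le hd fun _ => ?_
    exact li_card_le Hwa
  have hcard2 : (Fintype.card {I : Fin (m + q) → Fin d // StrictMono I} : ℝ) ≤ (d : ℝ) ^ d := by
    refine cardSM_le hd fun hne => ?_
    obtain ⟨I⟩ := hne
    have : Function.Injective I.1 := I.2.injective
    calc m + q = Fintype.card (Fin (m + q)) := (Fintype.card_fin _).symm
      _ ≤ Fintype.card (Fin d) := Fintype.card_le_of_injective I.1 this
      _ = d := Fintype.card_fin _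
  -- the squared chain
  have key : (wedgeNorm w * wedgeNorm (Fin.append wa b)) ^ 2
      ≤ ((d : ℝ) ^ d * (wedgeNorm wa * wedgeNorm (Fin.append w b))) ^ 2 := by
    have S1 : wedgeNorm w ^ 2 ≤ gdet w := sq_wedgeNorm_le_gdet w
    have S2 : wedgeNorm (Fin.append wa b) ^ 2 ≤ gdet w * gdet a1 * gdet b2 := by
      rw [← E1, ← E2]
      calc wedgeNorm (Fin.append (Fin.append w a1) b2) ^ 2
          ≤ gdet (Fin.append (Fin.append w a1) b2) := sq_wedgeNorm_le_gdet _
        _ = gdet w * gdet a1 * gdet b2 := by rw [G1, G2]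
    have S3 : gdet w * gdet a1 ≤ (d : ℝ) ^ d * wedgeNorm wa ^ 2 := by
      rw [← G2]
      calc gdet (Fin.append w a1)
          ≤ (Fintype.card {I : Fin (m + p) → Fin d // StrictMono I} : ℝ)
            * wedgeNorm (Fin.append w a1) ^ 2 := gdet_le_card_mul_sq_wedgeNorm _
        _ ≤ (d : ℝ) ^ d * wedgeNorm (Fin.append w a1) ^ 2 := by
            exact mul_le_mul_of_nonneg_right hcard1 (sq_nonneg _)
        _ = (d : ℝ) ^ d * wedgeNorm wa ^ 2 := by rw [E3]
    have S4 : gdet w * gdet b2 ≤ (d : ℝ) ^ d * wedgeNorm (Fin.append w b) ^ 2 := by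
      calc gdet w * gdet b2 ≤ gdet w * gdet b1 :=
            mul_le_mul_of_nonneg_left G4 (gdet_nonneg w)
        _ = gdet (Fin.append w b1) := G3.symm
        _ ≤ (Fintype.card {I : Fin (m + q) → Fin d // StrictMono I} : ℝ)
            * wedgeNorm (Fin.append w b1) ^ 2 := gdet_le_card_mul_sq_wedgeNorm _
        _ ≤ (d : ℝ) ^ d * wedgeNorm (Fin.append w b1) ^ 2 :=
            mul_le_mul_of_nonneg_right hcard2 (sq_nonneg _)
        _ = (d : ℝ) ^ d * wedgeNorm (Fin.append w b) ^ 2 := by rw [E4]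
    calc (wedgeNorm w * wedgeNorm (Fin.append wa b)) ^ 2
        = wedgeNorm w ^ 2 * wedgeNorm (Fin.append wa b) ^ 2 := by ring
      _ ≤ gdet w * (gdet w * gdet a1 * gdet b2) :=
          mul_le_mul S1 S2 (sq_nonneg _) (gdet_nonneg w)
      _ = (gdet w * gdet a1) * (gdet w * gdet b2) := by ring
      _ ≤ ((d : ℝ) ^ d * wedgeNorm wa ^ 2) * ((d : ℝ) ^ d * wedgeNorm (Fin.append w b) ^ 2) := by
          refine mul_le_mul S3 S4 ?_ ?_
          · exact mul_nonneg (gdet_nonneg w) (gdet_nonneg b2)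
          · positivity
      _ = ((d : ℝ) ^ d * (wedgeNorm wa * wedgeNorm (Fin.append w b))) ^ 2 := by ring
  have hL : 0 ≤ wedgeNorm w * wedgeNorm (Fin.append wa b) :=
    mul_nonneg (wedgeNorm_nonneg _) (wedgeNorm_nonneg _)
  have hR : 0 ≤ (d : ℝ) ^ d * (wedgeNorm wa * wedgeNorm (Fin.append w b)) := by
    have := mul_nonneg (wedgeNorm_nonneg wa) (wedgeNorm_nonneg (Fin.append w b))
    positivity
  calc wedgeNorm w * wedgeNorm (Fin.append wa b)
      = Real.sqrt ((wedgeNorm w * wedgeNorm (Fin.append wa b)) ^ 2) := (Real.sqrt_sq hL).symm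
    _ ≤ Real.sqrt (((d : ℝ) ^ d * (wedgeNorm wa * wedgeNorm (Fin.append w b))) ^ 2) :=
        Real.sqrt_le_sqrt key
    _ = (d : ℝ) ^ d * (wedgeNorm wa * wedgeNorm (Fin.append w b)) := Real.sqrt_sq hR

/-- ℚ-linearly independent families of rational vectors are ℝ-linearly independent after
coercion. -/
lemma rat_li_to_real (u : Fin k → Fin d → ℚ) (h : LinearIndependent ℚ u) :
    LinearIndependent ℝ (fun i j => ((u i j : ℚ) : ℝ)) := by
  classical
  set U : Matrix (Fin k) (Fin d) ℚ := Matrix.of u with hU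
  have hinj : LinearMap.ker U.vecMulLinear = ⊥ := by
    rw [LinearMap.ker_eq_bot']
    intro c hc
    funext i
    refine Fintype.linearIndependent_iff.mp h c ?_ i
    funext j
    have h0 := congrFun hc j
    simp only [Matrix.vecMulLinear_apply, Matrix.vecMul, dotProduct, Pi.zero_apply] at h0
    simpa [Finset.sum_apply, hU] using h0
  obtain ⟨g, hg⟩ := LinearMap.exists_leftInverse_of_injective _ hinj
  set G : Matrix (Fin d) (Fin k) ℚ := Matrix.of (fun j => g (Pi.single j 1)) with hGdef
  have hsingle : ∀ i : Fin k, U i = ∑ j : Fin d, U i j • (Pi.single j (1 : ℚ) : Fin d → ℚ) := by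
    intro i
    funext j'
    rw [Finset.sum_apply]
    simp [Pi.single_apply, Finset.sum_ite_eq]
  have hUi : ∀ i : Fin k, U.vecMulLinear (Pi.single i 1) = U i := by
    intro i
    funext j
    simp [Matrix.vecMul, dotProduct, Pi.single_apply, Finset.sum_ite_eq]
  have hUG : U * G = 1 := by
    ext i i'
    have h1 : (U * G) i i' = (∑ j, U i j • g (Pi.single j 1)) i' := by
      rw [Finset.sum_apply]
      simp [Matrix.mul_apply, hGdef, smul_eq_mul]
    have h3 : (∑ j, U i j • g (Pi.single j 1))
        = g (∑ j : Fin d, U i j • (Pi.single j (1 : ℚ) : Fin d → ℚ)) := by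
      rw [map_sum]
      exact Finset.sum_congr rfl fun j _ => (map_smul g _ _).symm
    have h2 : g (U.vecMulLinear (Pi.single i 1)) = Pi.single i 1 := by
      have := congrArg (fun φ => φ (Pi.single i (1:ℚ))) hg
      simpa using this
    rw [h1, h3, ← hsingle i, ← hUi i, h2]
    simp [Matrix.one_apply, Pi.single_apply, eq_comm]
  -- move to ℝ
  set Ur : Matrix (Fin k) (Fin d) ℝ := U.map (Rat.castHom ℝ) with hUr
  set Gr : Matrix (Fin d) (Fin k) ℝ := G.map (Rat.castHom ℝ) with hGr
  have hUGr : Ur * Gr = 1 := by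
    rw [hUr, hGr, ← Matrix.map_mul, hUG]
    exact Matrix.map_one _ (by simp) (by simp)
  rw [Fintype.linearIndependent_iff]
  intro c hc
  have hvm : c ᵥ* Ur = 0 := by
    funext j
    have h0 := congrFun hc j
    simp only [Finset.sum_apply, Pi.smul_apply, smul_eq_mul, Pi.zero_apply] at h0
    simpa [Matrix.vecMul, dotProduct, hUr, hU, Matrix.map_apply] using h0
  have : c = 0 := by
    have h1 : (c ᵥ* Ur) ᵥ* Gr = c ᵥ* (Ur * Gr) := Matrix.vecMul_vecMul c Ur Gr
    rw [hvm, hUGr, Matrix.vecMul_one, Matrix.zero_vecMul] at h1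
    exact h1.symm
  exact fun i => congrFun this i

/-- a ℤ-linearly independent family inside a lattice is ℝ-linearly independent. -/
lemma int_li_to_real {Λ : AddSubgroup (Fin d → ℝ)} {B : Fin d → Fin d → ℝ}
    (hBli : LinearIndependent ℝ B) (hBcl : AddSubgroup.closure (Set.range B) = Λ)
    (v : Fin k → Fin d → ℝ) (hv : ∀ i, v i ∈ Λ) (hli : LinearIndependent ℤ v) :
    LinearIndependent ℝ v := by
  classical
  have hcoord : ∀ i, ∃ c : Fin d → ℤ, v i = ∑ j, c j • B j := by
    intro i
    have h1 : v i ∈ Submodule.span ℤ (Set.range B) := by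
      have h2 : v i ∈ AddSubgroup.closure (Set.range B) := by rw [hBcl]; exact hv i
      rwa [← Submodule.span_int_eq_addSubgroupClosure, Submodule.mem_toAddSubgroup] at h2
    obtain ⟨c, hc⟩ := (Submodule.mem_span_range_iff_exists_fun ℤ).mp h1
    exact ⟨c, hc.symm⟩
  choose nn hnn using hcoord
  set uQ : Fin k → Fin d → ℚ := fun i j => ((nn i j : ℤ) : ℚ) with huQ
  have hsum_coord : ∀ (c : Fin k → ℤ), (∀ j, (∑ i, c i * nn i j) = 0) → ∑ i, c i • v i = 0 := by
    intro c hc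
    calc ∑ i, c i • v i = ∑ i, ∑ j, (c i * nn i j) • B j := by
          refine Finset.sum_congr rfl fun i _ => ?_
          rw [hnn i, Finset.smul_sum]
          exact Finset.sum_congr rfl fun j _ => by rw [mul_smul]
      _ = ∑ j, (∑ i, c i * nn i j) • B j := by
          rw [Finset.sum_comm]
          exact Finset.sum_congr rfl fun j _ => (Finset.sum_smul).symm
      _ = 0 := by
          refine Finset.sum_eq_zero fun j _ => ?_
          rw [hc j, zero_smul]
  have hliQZ : LinearIndependent ℤ uQ := by
    rw [Fintype.linearIndependent_iff]
    intro c hc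
    have hc0 : ∀ j, (∑ i, c i * nn i j) = 0 := by
      intro j
      have h0 := congrFun hc j
      simp only [Finset.sum_apply, Pi.smul_apply, Pi.zero_apply, huQ] at h0
      have : ((∑ i, c i * nn i j : ℤ) : ℚ) = 0 := by
        push_cast
        simpa [zsmul_eq_mul] using h0
      exact_mod_cast this
    exact fun i => Fintype.linearIndependent_iff.mp hli c (hsum_coord c hc0) i
  have hliQ : LinearIndependent ℚ uQ := (LinearIndependent.iff_fractionRing ℤ ℚ).mp hliQZ
  have hliR := rat_li_to_real uQ hliQ
  set Φ : (Fin d → ℝ) →ₗ[ℝ] (Fin d → ℝ) := (Matrix.of B)ᵀ.mulVecLin with hΦ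
  have hΦapp : ∀ y : Fin d → ℝ, Φ y = ∑ j, y j • B j := by
    intro y
    funext j'
    rw [hΦ, Matrix.mulVecLin_apply]
    simp only [Matrix.mulVec, dotProduct, Matrix.transpose_apply, Matrix.of_apply]
    rw [Finset.sum_apply]
    exact Finset.sum_congr rfl fun j _ => by simp [mul_comm]
  have hΦinj : LinearMap.ker Φ = ⊥ := by
    rw [LinearMap.ker_eq_bot']
    intro y hy
    rw [hΦapp] at hy
    funext j
    exact Fintype.linearIndependent_iff.mp hBli y hy j
  have hcomp : v = Φ ∘ (fun i j => ((uQ i j : ℚ) : ℝ)) := by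
    funext i
    rw [Function.comp_apply, hΦapp]
    rw [hnn i]
    refine Finset.sum_congr rfl fun j _ => ?_
    rw [huQ]
    push_cast
    rw [← Int.cast_smul_eq_zsmul ℝ]
  rw [hcomp]
  exact hliR.map' Φ hΦinj

/-- a real-independent family is ℤ-independent -/
lemma li_restrict_int {v : Fin k → Fin d → ℝ} (h : LinearIndependent ℝ v) :
    LinearIndependent ℤ v :=
  h.restrict_scalars (by
    intro a b hab
    simpa using hab)

lemma span_range_eq_span_coe {v : Fin k → Fin d → ℝ} {L : AddSubgroup (Fin d → ℝ)}
    (h : AddSubgroup.closure (Set.range v) = L) :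
    Submodule.span ℝ (Set.range v) = Submodule.span ℝ (L : Set (Fin d → ℝ)) := by
  apply le_antisymm
  · refine Submodule.span_mono ?_
    intro x hx
    rw [← h]
    exact AddSubgroup.subset_closure hx
  · rw [Submodule.span_le]
    intro x hx
    have h1 : x ∈ AddSubgroup.closure (Set.range v) := by rw [h]; exact hx
    rw [← Submodule.span_int_eq_addSubgroupClosure, Submodule.mem_toAddSubgroup] at h1
    have h2 : x ∈ Submodule.span ℝ (Set.range v) := by
      obtain ⟨c, hc⟩ := (Submodule.mem_span_range_iff_exists_fun ℤ).mp h1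
      rw [← hc]
      refine Submodule.sum_mem _ fun i _ => ?_
      rw [← Int.cast_smul_eq_zsmul ℝ]
      exact Submodule.smul_mem _ _ (Submodule.subset_span (Set.mem_range_self i))
    exact h2

/-- any two ℤ-bases have the same size -/
lemma isZBasis_card_eq {k k' : ℕ} {v : Fin k → Fin d → ℝ} {v' : Fin k' → Fin d → ℝ}
    {L : AddSubgroup (Fin d → ℝ)} (h : IsZBasis v L) (h' : IsZBasis v' L) : k = k' := by
  have h1 : Submodule.span ℝ (Set.range v) = Submodule.span ℝ (Set.range v') := by
    rw [span_range_eq_span_coe h.2, span_range_eq_span_coe h'.2]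
  have h2 := finrank_span_eq_card h.1
  have h3 := finrank_span_eq_card h'.1
  rw [h1] at h2
  rw [h2] at h3
  simpa [Fintype.card_fin] using h3

/-- any two ℤ-bases have the same wedge norm -/
lemma isZBasis_wedgeNorm_eq {k : ℕ} {v v' : Fin k → Fin d → ℝ}
    {L : AddSubgroup (Fin d → ℝ)} (h : IsZBasis v L) (h' : IsZBasis v' L) :
    wedgeNorm v' = wedgeNorm v := by
  classical
  have hmem : ∀ (u : Fin k → Fin d → ℝ), IsZBasis u L → ∀ x, x ∈ L →
      ∃ c : Fin k → ℤ, x = ∑ j, c j • u j := by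
    intro u hu x hx
    have h1 : x ∈ AddSubgroup.closure (Set.range u) := by rw [hu.2]; exact hx
    rw [← Submodule.span_int_eq_addSubgroupClosure, Submodule.mem_toAddSubgroup] at h1
    obtain ⟨c, hc⟩ := (Submodule.mem_span_range_iff_exists_fun ℤ).mp h1
    exact ⟨c, hc.symm⟩
  have hv'mem : ∀ i, v' i ∈ L := fun i => by
    rw [← h'.2]; exact AddSubgroup.subset_closure (Set.mem_range_self i)
  have hvmem : ∀ i, v i ∈ L := fun i => by
    rw [← h.2]; exact AddSubgroup.subset_closure (Set.mem_range_self i)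
  choose U hUc using fun i => hmem v h (v' i) (hv'mem i)
  choose W hWc using fun i => hmem v' h' (v i) (hvmem i)
  -- W * U = 1 over ℤ
  have hli : LinearIndependent ℤ v := li_restrict_int h.1
  have hWU : (Matrix.of W * Matrix.of U : Matrix (Fin k) (Fin k) ℤ) = 1 := by
    ext i j
    have hrel : ∑ l, ((Matrix.of W * Matrix.of U : Matrix (Fin k) (Fin k) ℤ) i l
        - (1 : Matrix (Fin k) (Fin k) ℤ) i l) • v l = 0 := by
      have h1 : v i = ∑ l, (Matrix.of W * Matrix.of U : Matrix (Fin k) (Fin k) ℤ) i l • v l := by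
        calc v i = ∑ j', W i j' • v' j' := hWc i
          _ = ∑ j', W i j' • (∑ l, U j' l • v l) := by
              exact Finset.sum_congr rfl fun j' _ => by rw [← hUc j']
          _ = ∑ j', ∑ l, (W i j' * U j' l) • v l := by
              refine Finset.sum_congr rfl fun j' _ => ?_
              rw [Finset.smul_sum]
              exact Finset.sum_congr rfl fun l _ => by rw [mul_smul]
          _ = ∑ l, (∑ j', W i j' * U j' l) • v l := by
              rw [Finset.sum_comm]
              exact Finset.sum_congr rfl fun l _ => (Finset.sum_smul).symm
          _ = ∑ l, (Matrix.of W * Matrix.of U : Matrix (Fin k) (Fin k) ℤ) i l • v l := by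
              exact Finset.sum_congr rfl fun l _ => by rw [Matrix.mul_apply]; rfl
      have h2 : v i = ∑ l, (1 : Matrix (Fin k) (Fin k) ℤ) i l • v l := by
        simp [Matrix.one_apply, ite_smul, Finset.sum_ite_eq]
      calc ∑ l, ((Matrix.of W * Matrix.of U : Matrix (Fin k) (Fin k) ℤ) i l
            - (1 : Matrix (Fin k) (Fin k) ℤ) i l) • v l
          = (∑ l, (Matrix.of W * Matrix.of U : Matrix (Fin k) (Fin k) ℤ) i l • v l)
            - ∑ l, (1 : Matrix (Fin k) (Fin k) ℤ) i l • v l := by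
            rw [← Finset.sum_sub_distrib]
            exact Finset.sum_congr rfl fun l _ => sub_smul _ _ _
        _ = 0 := by rw [← h1, ← h2, sub_self]
    have := Fintype.linearIndependent_iff.mp hli _ hrel j
    exact sub_eq_zero.mp this
  have hdet : (Matrix.of U : Matrix (Fin k) (Fin k) ℤ).det = 1 ∨ (Matrix.of U).det = -1 := by
    have h1 : (Matrix.of W).det * (Matrix.of U).det = 1 := by
      rw [← Matrix.det_mul, hWU, Matrix.det_one]
    have h2 : IsUnit (Matrix.of U : Matrix (Fin k) (Fin k) ℤ).det :=
      IsUnit.of_mul_eq_one _ (by rw [mul_comm] at h1; exact h1)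
    exact Int.isUnit_iff.mp h2
  set Ur : Matrix (Fin k) (Fin k) ℝ := (Matrix.of U).map (Int.castRingHom ℝ) with hUrdef
  have hUrdet : |Ur.det| = 1 := by
    rw [hUrdef, ← RingHom.mapMatrix_apply, ← RingHom.map_det]
    rcases hdet with h | h <;> rw [h] <;> norm_num
  have hv'tmul : v' = tmul Ur v := by
    funext i j
    have h0 := congrFun (hUc i) j
    rw [Finset.sum_apply] at h0
    rw [h0]
    unfold tmul
    refine Finset.sum_congr rfl fun l _ => ?_
    simp [hUrdef, Matrix.map_apply, zsmul_eq_mul]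
  rw [hv'tmul]
  exact wedgeNorm_tmul hUrdet v

/-- `latNorm` is computed by any ℤ-basis. -/
lemma latNorm_eq {L : AddSubgroup (Fin d → ℝ)} {v : Fin k → Fin d → ℝ} (h : IsZBasis v L) :
    latNorm L = wedgeNorm v := by
  have hmem : wedgeNorm v ∈ {r : ℝ | ∃ (k : ℕ) (v : Fin k → Fin d → ℝ),
      IsZBasis v L ∧ r = wedgeNorm v} := ⟨k, v, h, rfl⟩
  have huniq : ∀ r ∈ {r : ℝ | ∃ (k : ℕ) (v : Fin k → Fin d → ℝ),
      IsZBasis v L ∧ r = wedgeNorm v}, r = wedgeNorm v := by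
    rintro r ⟨k', v', h', rfl⟩
    have hkk := isZBasis_card_eq h' h
    subst hkk
    exact isZBasis_wedgeNorm_eq h h'
  refine le_antisymm (csInf_le ⟨0, fun r hr => ?_⟩ hmem) (le_csInf ⟨_, hmem⟩
    fun r hr => (huniq r hr).ge)
  rw [huniq r hr]
  exact wedgeNorm_nonneg v

lemma mem_closure_iff_span {s : Set (Fin d → ℝ)} {x : Fin d → ℝ} :
    x ∈ AddSubgroup.closure s ↔ x ∈ Submodule.span ℤ s := by
  rw [← Submodule.span_int_eq_addSubgroupClosure, Submodule.mem_toAddSubgroup]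

/-- Smith normal form construction: a ℤ-basis of a "primitive" subgroup `N` of `L`
extending to a ℤ-basis of `L`. -/
lemma smith_adapted {Λ N L : AddSubgroup (Fin d → ℝ)} {B : Fin d → Fin d → ℝ}
    (hBli : LinearIndependent ℝ B) (hBcl : AddSubgroup.closure (Set.range B) = Λ)
    (hNL : N ≤ L) (hLΛ : L ≤ Λ)
    (hNprim : ∀ x, x ∈ Λ → x ∈ Submodule.span ℝ (N : Set (Fin d → ℝ)) → x ∈ N) :
    ∃ (m p : ℕ) (w : Fin m → Fin d → ℝ) (a : Fin p → Fin d → ℝ),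
      IsZBasis w N ∧ IsZBasis (Fin.append w a) L := by
  classical
  set Λ' : Submodule ℤ (Fin d → ℝ) := AddSubgroup.toIntSubmodule Λ with hΛ'
  have hspanΛ : Submodule.span ℤ (Set.range B) = Λ' := by
    rw [← Submodule.toAddSubgroup_inj]
    rw [Submodule.span_int_eq_addSubgroupClosure, hBcl, hΛ',
      AddSubgroup.toIntSubmodule_toAddSubgroup]
  have hBliZ : LinearIndependent ℤ B := li_restrict_int hBli
  let bΛ : Module.Basis (Fin d) ℤ ↥Λ' := (Module.Basis.span hBliZ).map (LinearEquiv.ofEq _ _ hspanΛ)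
  set NN : Submodule ℤ ↥Λ' := Submodule.comap Λ'.subtype (AddSubgroup.toIntSubmodule N)
    with hNN
  set LL : Submodule ℤ ↥Λ' := Submodule.comap Λ'.subtype (AddSubgroup.toIntSubmodule L)
    with hLL
  have hNNLL : NN ≤ LL := fun x hx => hNL hx
  obtain ⟨nn, o, hno, bO, bN, aa, snf⟩ :=
    Submodule.exists_smith_normal_form_of_le bΛ NN LL hNNLL
  -- the family of vectors in ℝ^d
  set ι : ↥LL →ₗ[ℤ] (Fin d → ℝ) := Λ'.subtype.comp LL.subtype with hι
  set F : Fin o → (Fin d → ℝ) := fun i => ι (bO i) with hF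
  have hFmemL : ∀ i, F i ∈ L := by
    intro i
    exact (bO i).2
  have hFmemΛ : ∀ i, F i ∈ Λ := fun i => hLΛ (hFmemL i)
  -- ℤ-independence of F
  have hιinj : LinearMap.ker ι = ⊥ := by
    rw [hι, LinearMap.ker_eq_bot]
    exact (Submodule.injective_subtype Λ').comp (Submodule.injective_subtype LL)
  have hFli : LinearIndependent ℤ F := bO.linearIndependent.map' ι hιinj
  -- the value of bN in ℝ^d
  set ιN : ↥NN →ₗ[ℤ] (Fin d → ℝ) := Λ'.subtype.comp NN.subtype with hιN
  set FN : Fin nn → (Fin d → ℝ) := fun i => ιN (bN i) with hFN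
  have hFNmem : ∀ i, FN i ∈ N := by
    intro i
    exact (bN i).2
  have hsnfV : ∀ i : Fin nn, FN i = aa i • F (Fin.castLE hno i) := by
    intro i
    have h1 := snf i
    have h2 : (↑(bN i) : ↥Λ') = aa i • (↑(bO (Fin.castLE hno i)) : ↥Λ') := by
      exact_mod_cast h1
    calc FN i = Λ'.subtype ((bN i : ↥Λ')) := rfl
      _ = Λ'.subtype (aa i • (bO (Fin.castLE hno i) : ↥Λ')) := by rw [h2]
      _ = aa i • F (Fin.castLE hno i) := by
          rw [map_zsmul]
          rfl
  -- the adapted families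
  set w : Fin nn → (Fin d → ℝ) := fun i => F (Fin.castLE hno i) with hw
  set a : Fin (o - nn) → (Fin d → ℝ) := fun j => F ⟨nn + j.1, by omega⟩ with ha
  set fc : Fin (nn + (o - nn)) → Fin o := fun i => ⟨i.1, by omega⟩ with hfc
  have happ : Fin.append w a = fun i => F (fc i) := by
    funext i
    refine Fin.addCases (fun i₀ => ?_) (fun i₀ => ?_) i
    · rw [Fin.append_left]
      congr 1
    · rw [Fin.append_right]
      congr 1
  have hfc_inj : Function.Injective fc := by
    intro x y hxy
    have := congrArg Fin.val hxy
    exact Fin.ext this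
  have hfc_surj : Function.Surjective fc := by
    intro l
    exact ⟨⟨l.1, by omega⟩, rfl⟩
  -- ℤ then ℝ independence of the appended family
  have happli : LinearIndependent ℝ (Fin.append w a) := by
    rw [happ]
    refine int_li_to_real hBli hBcl _ (fun i => hFmemΛ (fc i)) ?_
    exact hFli.comp fc hfc_inj
  -- closure of appended family = L
  have hrange : Set.range (Fin.append w a) = Set.range F := by
    rw [happ]
    exact Function.Surjective.range_comp hfc_surj F
  have hspanF : Submodule.span ℤ (Set.range F) = AddSubgroup.toIntSubmodule L := by
    have h1 : Set.range F = ι '' Set.range bO := by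
      rw [hF, ← Set.range_comp]
      rfl
    rw [h1, ← Submodule.map_span, bO.span_eq, Submodule.map_top, hι, LinearMap.range_comp,
      Submodule.range_subtype, hLL, Submodule.map_comap_subtype, inf_eq_right]
    exact fun x hx => hLΛ hx
  have hclosure : AddSubgroup.closure (Set.range (Fin.append w a)) = L := by
    rw [hrange, ← Submodule.span_int_eq_addSubgroupClosure, hspanF,
      AddSubgroup.toIntSubmodule_toAddSubgroup]
  -- IsZBasis w N
  have hwmem : ∀ i, w i ∈ N := by
    intro i
    have haane : aa i ≠ 0 := by
      intro h0
      have h1 := hsnfV i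
      rw [h0, zero_smul] at h1
      have h2 : bN i = 0 := by
        have h3 : ιN (bN i) = ιN 0 := by rw [map_zero]; exact h1
        exact LinearMap.ker_eq_bot.mp (by
          rw [hιN, LinearMap.ker_eq_bot]
          exact (Submodule.injective_subtype Λ').comp (Submodule.injective_subtype NN)) h3
      exact bN.ne_zero i h2
    refine hNprim _ (hFmemΛ _) ?_
    have h1 : FN i ∈ Submodule.span ℝ (N : Set (Fin d → ℝ)) :=
      Submodule.subset_span (hFNmem i)
    have h2 : w i = ((aa i : ℝ))⁻¹ • FN i := by
      rw [hsnfV i, ← Int.cast_smul_eq_zsmul ℝ, smul_smul, inv_mul_cancel₀ (by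
        exact_mod_cast haane), one_smul]
    rw [h2]
    exact Submodule.smul_mem _ _ h1
  have hwcl : AddSubgroup.closure (Set.range w) = N := by
    apply le_antisymm
    · rw [AddSubgroup.closure_le]
      rintro x ⟨i, rfl⟩
      exact hwmem i
    · intro x hx
      have hxΛ : x ∈ Λ := hLΛ (hNL hx)
      set xNN : ↥NN := ⟨⟨x, hxΛ⟩, hx⟩ with hxNN
      have hrepr := bN.sum_repr xNN
      have hx' : x = ∑ j, (bN.repr xNN j * aa j) • w j := by
        calc x = ιN xNN := rfl
          _ = ιN (∑ i, bN.repr xNN i • bN i) := by rw [hrepr]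
          _ = ∑ i, ιN (bN.repr xNN i • bN i) := map_sum ιN _ _
          _ = ∑ j, (bN.repr xNN j * aa j) • w j := by
              refine Finset.sum_congr rfl fun j _ => ?_
              have h2 : ιN (bN j) = aa j • w j := hsnfV j
              rw [map_zsmul, h2, smul_smul]
      rw [mem_closure_iff_span, hx']
      refine Submodule.sum_mem _ fun j _ => ?_
      exact Submodule.smul_mem _ _ (Submodule.subset_span (Set.mem_range_self j))
  exact ⟨nn, o - nn, w, a, ⟨li_append_left happli, hwcl⟩, ⟨happli, hclosure⟩⟩

lemma range_append {α : Type*} (u : Fin m → α) (x : Fin p → α) :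
    Set.range (Fin.append u x) = Set.range u ∪ Set.range x := by
  ext y
  constructor
  · rintro ⟨i, rfl⟩
    refine Fin.addCases (fun i₀ => ?_) (fun i₀ => ?_) i
    · rw [Fin.append_left]; exact Or.inl (Set.mem_range_self _)
    · rw [Fin.append_right]; exact Or.inr (Set.mem_range_self _)
  · rintro (⟨i, rfl⟩ | ⟨j, rfl⟩)
    · exact ⟨Fin.castAdd p i, Fin.append_left u x i⟩
    · exact ⟨Fin.natAdd m j, Fin.append_right u x j⟩

lemma sum_append_split {M : Type*} [AddCommMonoid M] (c : Fin (m + p) → M) :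
    ∑ l, c l = (∑ i, c (Fin.castAdd p i)) + ∑ j, c (Fin.natAdd m j) :=
  Fin.sum_univ_add _

/-- replace the `N`-part basis `u'` of a basis `(u', x)` of `L` by another basis `u` of `N` -/
lemma isZBasis_swap {N L : AddSubgroup (Fin d → ℝ)} {u u' : Fin m → Fin d → ℝ}
    {x : Fin q → Fin d → ℝ}
    (hu : IsZBasis u N) (hu' : IsZBasis u' N) (hx : IsZBasis (Fin.append u' x) L) :
    IsZBasis (Fin.append u x) L := by
  constructor
  · -- linear independence
    rw [Fintype.linearIndependent_iff]
    intro c hc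
    have hsplit : (∑ i, c (Fin.castAdd q i) • u i) + (∑ j, c (Fin.natAdd m j) • x j) = 0 := by
      rw [← hc, sum_append_split (fun l => c l • Fin.append u x l)]
      congr 1
      · exact Finset.sum_congr rfl fun i _ => by rw [Fin.append_left]
      · exact Finset.sum_congr rfl fun j _ => by rw [Fin.append_right]
    have hspan : Submodule.span ℝ (Set.range u) = Submodule.span ℝ (Set.range u') := by
      rw [span_range_eq_span_coe hu.2, span_range_eq_span_coe hu'.2]
    -- y = Σ c x j parts lies in span u = span u'
    have hy : (∑ j, c (Fin.natAdd m j) • x j) ∈ Submodule.span ℝ (Set.range u') := by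
      rw [← hspan]
      have h1 : (∑ j, c (Fin.natAdd m j) • x j) = ∑ i, (-(c (Fin.castAdd q i))) • u i := by
        have h2 := eq_neg_of_add_eq_zero_right hsplit
        rw [h2, ← Finset.sum_neg_distrib]
        exact Finset.sum_congr rfl fun i _ => (neg_smul _ _).symm
      rw [h1]
      exact Submodule.sum_mem _ fun i _ =>
        Submodule.smul_mem _ _ (Submodule.subset_span (Set.mem_range_self i))
    obtain ⟨δ, hδ⟩ := (Submodule.mem_span_range_iff_exists_fun ℝ).mp hy
    -- relation on (u', x)
    have hrel : ∑ l, (Fin.append (fun i => -δ i) (fun j => c (Fin.natAdd m j))) l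
        • (Fin.append u' x) l = 0 := by
      rw [sum_append_split (fun l => (Fin.append (fun i => -δ i)
        (fun j => c (Fin.natAdd m j))) l • (Fin.append u' x) l)]
      have h1 : ∀ i, (Fin.append (fun i => -δ i) (fun j => c (Fin.natAdd m j)))
          (Fin.castAdd q i) • (Fin.append u' x) (Fin.castAdd q i) = (-δ i) • u' i := by
        intro i; rw [Fin.append_left, Fin.append_left]
      have h2 : ∀ j, (Fin.append (fun i => -δ i) (fun j => c (Fin.natAdd m j)))
          (Fin.natAdd m j) • (Fin.append u' x) (Fin.natAdd m j)
          = c (Fin.natAdd m j) • x j := by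
        intro j; rw [Fin.append_right, Fin.append_right]
      rw [Finset.sum_congr rfl fun i _ => h1 i, Finset.sum_congr rfl fun j _ => h2 j]
      have : ∑ i, (-δ i) • u' i = -∑ i, δ i • u' i := by
        rw [← Finset.sum_neg_distrib]
        exact Finset.sum_congr rfl fun i _ => neg_smul _ _
      rw [this, hδ]
      exact neg_add_cancel _
    have hz := Fintype.linearIndependent_iff.mp hx.1 _ hrel
    have hcb : ∀ j, c (Fin.natAdd m j) = 0 := by
      intro j
      have := hz (Fin.natAdd m j)
      rwa [Fin.append_right] at this
    have hca : ∀ i, c (Fin.castAdd q i) = 0 := by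
      have hy0 : (∑ j, c (Fin.natAdd m j) • x j) = 0 := by
        refine Finset.sum_eq_zero fun j _ => ?_
        rw [hcb j, zero_smul]
      rw [hy0, add_zero] at hsplit
      exact fun i => Fintype.linearIndependent_iff.mp hu.1 _ hsplit i
    intro l
    refine Fin.addCases (fun i => hca i) (fun j => hcb j) l
  · -- closure
    rw [range_append, AddSubgroup.closure_union, hu.2]
    have h1 : L = AddSubgroup.closure (Set.range u' ∪ Set.range x) := by
      rw [← hx.2, range_append]
    rw [h1, AddSubgroup.closure_union, hu'.2]

/-- a ℤ-basis for the join -/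
lemma isZBasis_sup {Λ L₁ L₂ : AddSubgroup (Fin d → ℝ)} {B : Fin d → Fin d → ℝ}
    (hBli : LinearIndependent ℝ B) (hBcl : AddSubgroup.closure (Set.range B) = Λ)
    (hL₁ : L₁ ≤ Λ) (hL₂ : L₂ ≤ Λ)
    {w : Fin m → Fin d → ℝ} {a : Fin p → Fin d → ℝ} {b : Fin q → Fin d → ℝ}
    (hw : IsZBasis w (L₁ ⊓ L₂)) (hwa : IsZBasis (Fin.append w a) L₁)
    (hwb : IsZBasis (Fin.append w b) L₂) :
    IsZBasis (Fin.append (Fin.append w a) b) (L₁ ⊔ L₂) := by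
  have hwaL₁ : ∀ i, Fin.append w a i ∈ L₁ := fun i => by
    rw [← hwa.2]; exact AddSubgroup.subset_closure (Set.mem_range_self i)
  have hwbL₂ : ∀ i, Fin.append w b i ∈ L₂ := fun i => by
    rw [← hwb.2]; exact AddSubgroup.subset_closure (Set.mem_range_self i)
  have hbL₂ : ∀ j, b j ∈ L₂ := fun j => by
    have := hwbL₂ (Fin.natAdd m j)
    rwa [Fin.append_right] at this
  have hwL₁ : ∀ i, w i ∈ L₁ := fun i => by
    have := hwaL₁ (Fin.castAdd p i)
    rwa [Fin.append_left] at this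
  constructor
  · -- linear independence: first over ℤ, then over ℝ
    have hliZ : LinearIndependent ℤ (Fin.append (Fin.append w a) b) := by
      rw [Fintype.linearIndependent_iff]
      intro c hc
      have hsplit : (∑ i, c (Fin.castAdd q i) • Fin.append w a i)
          + (∑ j, c (Fin.natAdd (m + p) j) • b j) = 0 := by
        rw [← hc, sum_append_split (fun l => c l • Fin.append (Fin.append w a) b l)]
        congr 1
        · exact Finset.sum_congr rfl fun i _ => by rw [Fin.append_left]
        · exact Finset.sum_congr rfl fun j _ => by rw [Fin.append_right]
      set y := ∑ j, c (Fin.natAdd (m + p) j) • b j with hy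
      have hyL₂ : y ∈ L₂ := by
        refine AddSubgroup.sum_mem _ fun j _ => AddSubgroup.zsmul_mem _ (hbL₂ j) _
      have hyL₁ : y ∈ L₁ := by
        have h1 : y = -∑ i, c (Fin.castAdd q i) • Fin.append w a i :=
          eq_neg_of_add_eq_zero_right hsplit
        rw [h1]
        refine AddSubgroup.neg_mem _ (AddSubgroup.sum_mem _ fun i _ =>
          AddSubgroup.zsmul_mem _ (hwaL₁ i) _)
      have hyN : y ∈ AddSubgroup.closure (Set.range w) := by
        rw [hw.2]; exact ⟨hyL₁, hyL₂⟩
      rw [mem_closure_iff_span] at hyN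
      obtain ⟨δ, hδ⟩ := (Submodule.mem_span_range_iff_exists_fun ℤ).mp hyN
      -- integer relation on (w, b)
      have hrel : ∑ l, (Fin.append (fun i => -δ i) (fun j => c (Fin.natAdd (m + p) j))) l
          • (Fin.append w b) l = 0 := by
        rw [sum_append_split (fun l => (Fin.append (fun i => -δ i)
          (fun j => c (Fin.natAdd (m + p) j))) l • (Fin.append w b) l)]
        have h1 : ∀ i : Fin m, (Fin.append (fun i => -δ i)
            (fun j => c (Fin.natAdd (m + p) j))) (Fin.castAdd q i)
            • (Fin.append w b) (Fin.castAdd q i) = (-δ i) • w i := by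
          intro i; rw [Fin.append_left, Fin.append_left]
        have h2 : ∀ j : Fin q, (Fin.append (fun i => -δ i)
            (fun j => c (Fin.natAdd (m + p) j))) (Fin.natAdd m j)
            • (Fin.append w b) (Fin.natAdd m j) = c (Fin.natAdd (m + p) j) • b j := by
          intro j; rw [Fin.append_right, Fin.append_right]
        rw [Finset.sum_congr rfl fun i _ => h1 i, Finset.sum_congr rfl fun j _ => h2 j]
        have h3 : ∑ i, (-δ i) • w i = -∑ i, δ i • w i := by
          rw [← Finset.sum_neg_distrib]
          exact Finset.sum_congr rfl fun i _ => neg_smul _ _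
        rw [h3, hδ, ← hy]
        exact neg_add_cancel _
      have hz := Fintype.linearIndependent_iff.mp (li_restrict_int hwb.1) _ hrel
      have hcb : ∀ j, c (Fin.natAdd (m + p) j) = 0 := by
        intro j
        have := hz (Fin.natAdd m j)
        rwa [Fin.append_right] at this
      have hca : ∀ i, c (Fin.castAdd q i) = 0 := by
        have hy0 : y = 0 := by
          rw [hy]
          exact Finset.sum_eq_zero fun j _ => by rw [hcb j, zero_smul]
        rw [hy0, add_zero] at hsplit
        exact fun i => Fintype.linearIndependent_iff.mp (li_restrict_int hwa.1) _ hsplit i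
      intro l
      refine Fin.addCases (fun i => hca i) (fun j => hcb j) l
    refine int_li_to_real hBli hBcl _ (fun l => ?_) hliZ
    refine Fin.addCases (fun i => ?_) (fun j => ?_) l
    · rw [Fin.append_left]; exact hL₁ (hwaL₁ i)
    · rw [Fin.append_right]; exact hL₂ (hbL₂ j)
  · -- closure
    rw [range_append, AddSubgroup.closure_union, hwa.2]
    have h2 : L₂ = AddSubgroup.closure (Set.range w) ⊔ AddSubgroup.closure (Set.range b) := by
      rw [← AddSubgroup.closure_union, ← range_append, hwb.2]
    have h3 : AddSubgroup.closure (Set.range w) ≤ L₁ := by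
      rw [AddSubgroup.closure_le]
      rintro x ⟨i, rfl⟩
      exact hwL₁ i
    rw [h2, ← sup_assoc, sup_eq_left.mpr h3]

/-- main theorem -/
theorem stmt_5' (d : ℕ) (hd : 0 < d) :
    ∃ D : ℝ, 0 < D ∧
      ∀ Λ : AddSubgroup (Fin d → ℝ), IsUnimodularLattice Λ →
        ∀ L₁ L₂ : AddSubgroup (Fin d → ℝ), IsPrimitiveIn L₁ Λ → IsPrimitiveIn L₂ Λ →
          latNorm (L₁ ⊓ L₂) * latNorm (L₁ ⊔ L₂) ≤ D * latNorm L₁ * latNorm L₂ := by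
  refine ⟨(d : ℝ) ^ d, by positivity, ?_⟩
  intro Λ hΛ L₁ L₂ h₁ h₂
  obtain ⟨B, hBdet, hBli, hBcl⟩ := hΛ
  have hNprim : ∀ x, x ∈ Λ → x ∈ Submodule.span ℝ ((L₁ ⊓ L₂ : AddSubgroup (Fin d → ℝ)) :
      Set (Fin d → ℝ)) → x ∈ L₁ ⊓ L₂ := by
    intro x hxΛ hxs
    have hsub1 : ((L₁ ⊓ L₂ : AddSubgroup (Fin d → ℝ)) : Set (Fin d → ℝ)) ⊆
        (L₁ : Set (Fin d → ℝ)) := fun z hz => hz.1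
    have hsub2 : ((L₁ ⊓ L₂ : AddSubgroup (Fin d → ℝ)) : Set (Fin d → ℝ)) ⊆
        (L₂ : Set (Fin d → ℝ)) := fun z hz => hz.2
    have hx1 : x ∈ L₁ := by
      have : x ∈ (Λ : Set (Fin d → ℝ)) ∩ (Submodule.span ℝ (L₁ : Set (Fin d → ℝ)) :
          Set (Fin d → ℝ)) := ⟨hxΛ, Submodule.span_mono hsub1 hxs⟩
      rw [← h₁.2] at this
      exact this
    have hx2 : x ∈ L₂ := by
      have : x ∈ (Λ : Set (Fin d → ℝ)) ∩ (Submodule.span ℝ (L₂ : Set (Fin d → ℝ)) :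
          Set (Fin d → ℝ)) := ⟨hxΛ, Submodule.span_mono hsub2 hxs⟩
      rw [← h₂.2] at this
      exact this
    exact ⟨hx1, hx2⟩
  obtain ⟨m₁, p, w, a, hw, hwa⟩ :=
    smith_adapted hBli hBcl (inf_le_left : L₁ ⊓ L₂ ≤ L₁) h₁.1 hNprim
  obtain ⟨m₂, q, w', b, hw', hw'b⟩ :=
    smith_adapted hBli hBcl (inf_le_right : L₁ ⊓ L₂ ≤ L₂) h₂.1 hNprim
  have hm : m₂ = m₁ := isZBasis_card_eq hw' hw
  subst hm
  have hwb : IsZBasis (Fin.append w b) L₂ := isZBasis_swap hw hw' hw'b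
  have hsup : IsZBasis (Fin.append (Fin.append w a) b) (L₁ ⊔ L₂) :=
    isZBasis_sup hBli hBcl h₁.1 h₂.1 hw hwa hwb
  rw [latNorm_eq hw, latNorm_eq hwa, latNorm_eq hwb, latNorm_eq hsup]
  have := analytic_ineq hd w a b hwa.1 hw.1
  calc wedgeNorm w * wedgeNorm (Fin.append (Fin.append w a) b)
      ≤ (d : ℝ) ^ d * (wedgeNorm (Fin.append w a) * wedgeNorm (Fin.append w b)) := this
    _ = (d : ℝ) ^ d * wedgeNorm (Fin.append w a) * wedgeNorm (Fin.append w b) := by ring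

end EMMAux

/-- Submodularity of lattice covolumes (EMM Lemma 5.6, sup-norm version): there is `D > 0`,
depending only on `d`, such that for every unimodular lattice `Λ ⊆ ℝ^d` and all primitive
subgroups `Λ₁, Λ₂` of `Λ`, `‖Λ₁ ∩ Λ₂‖ ‖Λ₁ + Λ₂‖ ≤ D ‖Λ₁‖ ‖Λ₂‖`. -/
theorem stmt_5 (d : ℕ) (hd : 0 < d) :
    ∃ D : ℝ, 0 < D ∧
      ∀ Λ : AddSubgroup (Fin d → ℝ), IsUnimodularLattice Λ →
        ∀ L₁ L₂ : AddSubgroup (Fin d → ℝ), IsPrimitiveIn L₁ Λ → IsPrimitiveIn L₂ Λ →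
          latNorm (L₁ ⊓ L₂) * latNorm (L₁ ⊔ L₂) ≤ D * latNorm L₁ * latNorm L₂ := by
  exact EMMAux.stmt_5' d hd
end

section
/- Let d ≥ 2 and let η_0, η_1, …, η_d with 1/η_0 = 1/η_d = 0 and η_i > 0 for 1 ≤ i ≤ d−1 satisfy (1/η_{i−j}) + (1/η_{i+j}) < 2/η_i for all 1 ≤ i ≤ d−1 and 1 ≤ j ≤ min{i, d−i}. Define α = min over all such (i,j) of 1 − (η_i/2)(1/η_{i−j} + 1/η_{i+j}) > 0. For ε ∈ (0,1) and positive reals φ_1, …, φ_{d−1}, set f = ε^{−1} + Σ_{l=1}^{d−1} φ_l^{η_l}. Then for all 1 ≤ l ≤ d−1 and 1 ≤ j ≤ min{l, d−l}, (φ_{l−j} φ_{l+j})^{η_l/2} ≤ ε^α f, where φ_0 = φ_d := 1. -/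
/-- The reciprocals `1/η_i` with the convention `1/η_0 = 1/η_d = 0`. -/
noncomputable def recEta (d : ℕ) (η : ℕ → ℝ) (i : ℕ) : ℝ :=
  if i = 0 ∨ i = d then 0 else (η i)⁻¹

/-- Key interpolation inequality for the height function: if the exponents `η_i` satisfy the
strict convexity condition and `α` is the associated positive exponent, then for
`f = ε⁻¹ + ∑ φ_l^{η_l}` one has `(φ_{l-j} φ_{l+j})^{η_l/2} ≤ ε^α f`. -/
theorem stmt_11 (d : ℕ) (hd : 2 ≤ d) (η : ℕ → ℝ)
    (hηpos : ∀ i, 1 ≤ i → i ≤ d - 1 → 0 < η i)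
    (hconv : ∀ i j, 1 ≤ i → i ≤ d - 1 → 1 ≤ j → j ≤ min i (d - i) →
      recEta d η (i - j) + recEta d η (i + j) < 2 / η i)
    (α : ℝ) (hα : 0 < α)
    (hαmin : ∀ i j, 1 ≤ i → i ≤ d - 1 → 1 ≤ j → j ≤ min i (d - i) →
      α ≤ 1 - η i / 2 * (recEta d η (i - j) + recEta d η (i + j)))
    (ε : ℝ) (hε0 : 0 < ε) (hε1 : ε < 1)
    (φ : ℕ → ℝ) (hφpos : ∀ i, 1 ≤ i → i ≤ d - 1 → 0 < φ i)
    (hφ0 : φ 0 = 1) (hφd : φ d = 1)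
    (f : ℝ) (hf : f = ε⁻¹ + ∑ i ∈ Finset.Icc 1 (d - 1), φ i ^ η i) :
    ∀ l j, 1 ≤ l → l ≤ d - 1 → 1 ≤ j → j ≤ min l (d - l) →
      (φ (l - j) * φ (l + j)) ^ (η l / 2) ≤ ε ^ α * f := by
  have hsum : 0 ≤ ∑ i ∈ Finset.Icc 1 (d - 1), φ i ^ η i := by
    apply Finset.sum_nonneg
    intro i hi
    simp only [Finset.mem_Icc] at hi
    exact Real.rpow_nonneg (hφpos i hi.1 hi.2).le _
  have hεinv : 0 < ε⁻¹ := inv_pos.mpr hε0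
  have hfε : ε⁻¹ ≤ f := by rw [hf]; linarith
  have hfpos : 0 < f := lt_of_lt_of_le hεinv hfε
  -- key: φ k ≤ f ^ recEta d η k for k ≤ d
  have key : ∀ k, k ≤ d → 0 < φ k ∧ φ k ≤ f ^ recEta d η k := by
    intro k hk
    by_cases h : k = 0 ∨ k = d
    · have hφk : φ k = 1 := by rcases h with h | h <;> subst h <;> simp [hφ0, hφd]
      rw [recEta, if_pos h, Real.rpow_zero, hφk]
      exact ⟨one_pos, le_refl 1⟩
    · push_neg at h
      have hk1 : 1 ≤ k := by omega
      have hkd : k ≤ d - 1 := by omega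
      have hφk := hφpos k hk1 hkd
      have hηk := hηpos k hk1 hkd
      have hterm : φ k ^ η k ≤ f := by
        rw [hf]
        have : φ k ^ η k ≤ ∑ i ∈ Finset.Icc 1 (d - 1), φ i ^ η i := by
          apply Finset.single_le_sum (f := fun i => φ i ^ η i)
          · intro i hi
            simp only [Finset.mem_Icc] at hi
            exact Real.rpow_nonneg (hφpos i hi.1 hi.2).le _
          · simp only [Finset.mem_Icc]; exact ⟨hk1, hkd⟩
        linarith
      refine ⟨hφk, ?_⟩
      rw [recEta, if_neg (by push_neg; exact h)]
      calc φ k = (φ k ^ η k) ^ (η k)⁻¹ := (Real.rpow_rpow_inv hφk.le hηk.ne').symm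
        _ ≤ f ^ (η k)⁻¹ :=
          Real.rpow_le_rpow (Real.rpow_nonneg hφk.le _) hterm (inv_nonneg.mpr hηk.le)
  have hrnn : ∀ k, k ≤ d → 0 ≤ recEta d η k := by
    intro k hk
    rw [recEta]
    split
    · exact le_refl 0
    · next h =>
        push_neg at h
        exact (inv_pos.mpr (hηpos k (by omega) (by omega))).le
  intro l j hl1 hl2 hj1 hj2
  have hlj1 : l - j ≤ d := by omega
  have hlj2 : l + j ≤ d := by omega
  obtain ⟨hp1, hb1⟩ := key (l - j) hlj1
  obtain ⟨hp2, hb2⟩ := key (l + j) hlj2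
  set r1 := recEta d η (l - j) with hr1
  set r2 := recEta d η (l + j) with hr2
  have hηl := hηpos l hl1 hl2
  have hs := hαmin l j hl1 hl2 hj1 hj2
  set s := η l / 2 * (r1 + r2) with hsdef
  have hs1 : s - 1 ≤ 0 := by linarith
  calc (φ (l - j) * φ (l + j)) ^ (η l / 2)
      ≤ (f ^ r1 * f ^ r2) ^ (η l / 2) :=
        Real.rpow_le_rpow (mul_nonneg hp1.le hp2.le)
          (mul_le_mul hb1 hb2 hp2.le (Real.rpow_nonneg hfpos.le _)) (by positivity)
    _ = f ^ s := by
        rw [← Real.rpow_add hfpos, ← Real.rpow_mul hfpos.le, hsdef, mul_comm]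
    _ = f ^ (s - 1) * f := by
        rw [← Real.rpow_add_one hfpos.ne']; ring_nf
    _ ≤ ε ^ (1 - s) * f := by
        apply mul_le_mul_of_nonneg_right _ hfpos.le
        have h1 : f ^ (s - 1) ≤ (ε⁻¹) ^ (s - 1) :=
          Real.rpow_le_rpow_of_nonpos hεinv hfε hs1
        have h2 : (ε⁻¹ : ℝ) ^ (s - 1) = ε ^ (1 - s) := by
          rw [Real.inv_rpow hε0.le, ← Real.rpow_neg hε0.le, neg_sub]
        linarith [h1, h2.le]
    _ ≤ ε ^ α * f :=
        mul_le_mul_of_nonneg_right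
          (Real.rpow_le_rpow_of_exponent_ge hε0 hε1.le (by linarith)) hfpos.le
end

section
/- Let Y be a locally compact second countable metric space with a continuous action of a group G containing a one-parameter flow (g_{e^t})_{t≥0}, let Y' ⊆ Y be a closed G-invariant subset, let y ∈ Y \ Y', and let 0 < q < p ≤ 1. Suppose x satisfies: for every compact K ⊆ Y \ Y', liminf_{T→∞} (1/T)∫_0^T 1_{Y∖K}(g_{e^t} u(x) y) dt ≥ p. Then for every compact K ⊆ Y \ Y' and every t > 1, there exists N such that for all integers M > N, (1/M)·#{l ∈ {1,…,M} : g_{t^l} u(x) y ∉ K} ≥ q. -/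
open MeasureTheory Classical

/-- Discretization of divergence on average: if the forward flow orbit of `z` spends
asymptotic proportion at least `p` of (continuous) time outside every compact subset of
`Y \ Y'`, then for every `q < p`, every compact `K ⊆ Y \ Y'` and every time step `t > 1`,
eventually at least a proportion `q` of the discrete times `l = 1, …, M` satisfy
`g_{t^l} z ∉ K`. -/
theorem stmt_12 {Y : Type*} [MetricSpace Y] [LocallyCompactSpace Y]
    [SecondCountableTopology Y]
    (Φ : ℝ → Y → Y) (hcont : Continuous fun p : ℝ × Y => Φ p.1 p.2)
    (hflow0 : ∀ y, Φ 0 y = y)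
    (hflow : ∀ s s' y, Φ s (Φ s' y) = Φ (s + s') y)
    (Y' : Set Y) (hY' : IsClosed Y') (hinv : ∀ s y, y ∈ Y' → Φ s y ∈ Y')
    (p q : ℝ) (hq0 : 0 < q) (hqp : q < p) (hp1 : p ≤ 1)
    (z : Y) (hz : z ∉ Y')
    (hdiv : ∀ K : Set Y, IsCompact K → K ⊆ Y'ᶜ →
      p ≤ Filter.liminf
        (fun T : ℝ => (∫ s in Set.Ioc (0 : ℝ) T, Set.indicator Kᶜ (fun _ => (1 : ℝ)) (Φ s z)) / T)
        Filter.atTop) :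
    ∀ K : Set Y, IsCompact K → K ⊆ Y'ᶜ → ∀ t : ℝ, 1 < t →
      ∃ N : ℕ, ∀ M : ℕ, N < M →
        q ≤ (((Finset.Icc 1 M).filter fun l : ℕ => Φ (l * Real.log t) z ∉ K).card : ℝ) / M := by
  intro K hK hKY t ht
  have hL : 0 < Real.log t := Real.log_pos ht
  set L := Real.log t with hLdef
  -- the thickened compact set
  set Kt : Set Y := (fun p : ℝ × Y => Φ p.1 p.2) '' (Set.Icc (-L) 0 ×ˢ K) with hKtdef
  have hKtc : IsCompact Kt := (isCompact_Icc.prod hK).image hcont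
  have hKtY : Kt ⊆ Y'ᶜ := by
    rintro w ⟨⟨σ, k⟩, ⟨hσ, hk⟩, rfl⟩ hmem
    apply hKY hk
    have h2 := hinv (-σ) _ hmem
    rwa [hflow, neg_add_cancel, hflow0] at h2
  have hliminf := hdiv Kt hKtc hKtY
  -- the set of times outside Kt
  set S : Set ℝ := {s : ℝ | Φ s z ∈ Ktᶜ} with hSdef
  have hScont : Continuous fun s : ℝ => Φ s z :=
    hcont.comp (continuous_id.prodMk continuous_const)
  have hSopen : IsOpen S := hKtc.isClosed.isOpen_compl.preimage hScont
  have hSm : MeasurableSet S := hSopen.measurableSet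
  -- rewrite the integral as a measure
  have hgT : ∀ T : ℝ, (∫ s in Set.Ioc (0 : ℝ) T,
      Set.indicator Ktᶜ (fun _ => (1 : ℝ)) (Φ s z))
      = (volume (Set.Ioc (0 : ℝ) T ∩ S)).toReal := by
    intro T
    have heq : ∀ s : ℝ, Set.indicator Ktᶜ (fun _ => (1 : ℝ)) (Φ s z)
        = S.indicator (fun _ => (1 : ℝ)) s := by
      intro s
      by_cases hs : Φ s z ∈ Ktᶜ
      · rw [Set.indicator_of_mem hs, Set.indicator_of_mem (by exact hs)]
      · rw [Set.indicator_of_notMem hs, Set.indicator_of_notMem (by exact hs)]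
    simp only [heq]
    rw [MeasureTheory.setIntegral_indicator hSm, MeasureTheory.setIntegral_const,
      smul_eq_mul, mul_one, measureReal_def]
  set g : ℝ → ℝ := fun T =>
    (∫ s in Set.Ioc (0 : ℝ) T, Set.indicator Ktᶜ (fun _ => (1 : ℝ)) (Φ s z)) / T with hgdef
  have hg_le_one : ∀ᶠ T : ℝ in Filter.atTop, g T ≤ 1 := by
    filter_upwards [Filter.eventually_ge_atTop (1 : ℝ)] with T hT
    have hT0 : (0 : ℝ) < T := lt_of_lt_of_le one_pos hT
    rw [hgdef]
    simp only
    rw [hgT]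
    rw [div_le_one hT0]
    have h1 : volume (Set.Ioc (0 : ℝ) T ∩ S) ≤ volume (Set.Ioc (0 : ℝ) T) :=
      measure_mono Set.inter_subset_left
    have h2 : volume (Set.Ioc (0 : ℝ) T) = ENNReal.ofReal T := by
      rw [Real.volume_Ioc, sub_zero]
    calc (volume (Set.Ioc (0 : ℝ) T ∩ S)).toReal
        ≤ (ENNReal.ofReal T).toReal :=
          ENNReal.toReal_mono (by simp) (h2 ▸ h1)
      _ = T := ENNReal.toReal_ofReal hT0.le
  have hbdd : Filter.IsBoundedUnder (· ≥ ·) Filter.atTop g := by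
    refine ⟨0, Filter.eventually_map.mpr ?_⟩
    filter_upwards [Filter.eventually_gt_atTop (0 : ℝ)] with T hT
    show 0 ≤ g T
    rw [hgdef]
    simp only
    rw [hgT]
    exact div_nonneg ENNReal.toReal_nonneg hT.le
  have hq_ev : ∀ᶠ T : ℝ in Filter.atTop, q < g T :=
    Filter.eventually_lt_of_lt_liminf (lt_of_lt_of_le hqp hliminf) hbdd
  obtain ⟨T0, hT0⟩ := Filter.eventually_atTop.1 hq_ev
  refine ⟨⌈T0 / L⌉₊, fun M hM => ?_⟩
  have hM0 : (0 : ℝ) < M := by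
    have : 0 < M := lt_of_le_of_lt (Nat.zero_le _) hM
    exact_mod_cast this
  set F : Finset ℕ := (Finset.Icc 1 M).filter fun l : ℕ => Φ (l * L) z ∉ K with hFdef
  -- key covering inequality
  have hcover : Set.Ioc (0 : ℝ) (M * L) ∩ S ⊆
      ⋃ l ∈ F, Set.Ioc (((l : ℝ) - 1) * L) ((l : ℝ) * L) := by
    rintro s ⟨⟨hs0, hsM⟩, hsS⟩
    set l : ℕ := ⌈s / L⌉₊ with hldef
    have hsL0 : 0 < s / L := div_pos hs0 hL
    have hl1 : 1 ≤ l := Nat.one_le_ceil_iff.mpr hsL0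
    have hlM : l ≤ M := Nat.ceil_le.mpr ((div_le_iff₀ hL).mpr hsM)
    have hs_le : s ≤ (l : ℝ) * L := by
      rw [← div_le_iff₀ hL]
      exact Nat.le_ceil _
    have hs_gt : ((l : ℝ) - 1) * L < s := by
      have hc : (l : ℝ) < s / L + 1 := Nat.ceil_lt_add_one hsL0.le
      have h2 : (l : ℝ) - 1 < s / L := by linarith
      have := (lt_div_iff₀ hL).mp h2
      linarith
    have hring : ((l : ℝ) - 1) * L = (l : ℝ) * L - L := by ring
    have hlF : l ∈ F := by
      rw [hFdef, Finset.mem_filter]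
      refine ⟨Finset.mem_Icc.mpr ⟨hl1, hlM⟩, fun hlK => ?_⟩
      refine hsS ⟨(s - (l : ℝ) * L, Φ ((l : ℝ) * L) z),
        ⟨⟨show -L ≤ s - (l : ℝ) * L by linarith, show s - (l : ℝ) * L ≤ 0 by linarith⟩,
          hlK⟩, ?_⟩
      show Φ (s - (l : ℝ) * L) (Φ ((l : ℝ) * L) z) = Φ s z
      rw [hflow, sub_add_cancel]
    exact Set.mem_biUnion hlF ⟨hs_gt, hs_le⟩
  have hvol : (volume (Set.Ioc (0 : ℝ) ((M : ℝ) * L) ∩ S)).toReal ≤ (F.card : ℝ) * L := by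
    have h1 : volume (Set.Ioc (0 : ℝ) ((M : ℝ) * L) ∩ S)
        ≤ ∑ l ∈ F, volume (Set.Ioc (((l : ℝ) - 1) * L) ((l : ℝ) * L)) :=
      le_trans (measure_mono hcover) (measure_biUnion_finset_le F _)
    have h2 : ∀ l ∈ F, volume (Set.Ioc (((l : ℝ) - 1) * L) ((l : ℝ) * L))
        = ENNReal.ofReal L := by
      intro l _
      rw [Real.volume_Ioc]
      congr 1
      ring
    rw [Finset.sum_congr rfl h2, Finset.sum_const, nsmul_eq_mul] at h1
    have h3 : (F.card : ENNReal) * ENNReal.ofReal L = ENNReal.ofReal ((F.card : ℝ) * L) := by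
      rw [ENNReal.ofReal_mul (by positivity), ENNReal.ofReal_natCast]
    rw [h3] at h1
    calc (volume (Set.Ioc (0 : ℝ) ((M : ℝ) * L) ∩ S)).toReal
        ≤ (ENNReal.ofReal ((F.card : ℝ) * L)).toReal := ENNReal.toReal_mono ENNReal.ofReal_ne_top h1
      _ = (F.card : ℝ) * L := ENNReal.toReal_ofReal (by positivity)
  have hML : (0 : ℝ) < (M : ℝ) * L := mul_pos hM0 hL
  have hq_lt : q < g ((M : ℝ) * L) := by
    apply hT0
    have h1 : T0 / L ≤ (⌈T0 / L⌉₊ : ℝ) := Nat.le_ceil _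
    have h2 : (⌈T0 / L⌉₊ : ℝ) ≤ (M : ℝ) := by exact_mod_cast hM.le
    have h3 : T0 ≤ (M : ℝ) * L := (div_le_iff₀ hL).mp (h1.trans h2)
    exact h3
  have hg_le : g ((M : ℝ) * L) ≤ (F.card : ℝ) / M := by
    rw [hgdef]
    simp only
    rw [hgT]
    rw [div_le_div_iff₀ hML hM0]
    calc (volume (Set.Ioc (0 : ℝ) ((M : ℝ) * L) ∩ S)).toReal * M
        ≤ ((F.card : ℝ) * L) * M := mul_le_mul_of_nonneg_right hvol hM0.le
      _ = (F.card : ℝ) * ((M : ℝ) * L) := by ring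
  exact le_of_lt (lt_of_lt_of_le hq_lt hg_le)
end

section
/- If θ ∈ M_{m×n}(ℝ) is (a,b)-singular, then for the weighted diagonal flow g_t and u(θ) = (I_m θ; 0 I_n), the shortest nonzero vector of the lattice g_t u(θ) ℤ^{m+n} tends to 0 in sup norm as t → ∞; more precisely, for every δ > 0 there exists T_δ such that for all t > T_δ, the lattice g_t u(θ) ℤ^{m+n} contains a nonzero vector of sup norm at most δ^{a_m b_n/(a_m + b_n)}. -/
/-- From `|x| ^ s⁻¹ ≤ y` with `0 < s`, `0 ≤ y`, deduce `|x| ≤ y ^ s`. -/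
lemma abs_le_of_rpow_inv_le {x y s : ℝ} (hs : 0 < s) (hy : 0 ≤ y)
    (h : |x| ^ s⁻¹ ≤ y) : |x| ≤ y ^ s := by
  have h2 := Real.rpow_le_rpow (Real.rpow_nonneg (abs_nonneg x) _) h hs.le
  rwa [← Real.rpow_mul (abs_nonneg x), inv_mul_cancel₀ hs.ne', Real.rpow_one] at h2

/-- If `θ` is `(a,b)`-singular, then for every `δ > 0` there is `T_δ` such that for all
`t > T_δ` the lattice `g_t u(θ) ℤ^{m+n}` contains a nonzero vector of sup norm at most
`δ^{a_m b_n / (a_m + b_n)}`. -/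
theorem stmt_13 (m n : ℕ) (hm : 0 < m) (hn : 0 < n)
    (a : Fin m → ℝ) (b : Fin n → ℝ)
    (ha : Antitone a) (hb : Antitone b)
    (hapos : ∀ i, 0 < a i) (hbpos : ∀ j, 0 < b j)
    (hasum : ∑ i, a i = 1) (hbsum : ∑ j, b j = 1)
    (am bn : ℝ)
    (ham : am = a ⟨m - 1, Nat.sub_lt hm Nat.one_pos⟩)
    (hbn : bn = b ⟨n - 1, Nat.sub_lt hn Nat.one_pos⟩)
    (θ : Fin m → Fin n → ℝ)
    (hsing : ∀ ε : ℝ, 0 < ε → ∃ Tε : ℝ, ∀ T : ℝ, Tε < T →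
      ∃ (p : Fin m → ℤ) (q : Fin n → ℤ), q ≠ 0 ∧
        (∀ i, |(p i : ℝ) + ∑ j, θ i j * (q j : ℝ)| ^ (a i)⁻¹ ≤ ε / T) ∧
        (∀ j, |(q j : ℝ)| ^ (b j)⁻¹ ≤ T)) :
    ∀ δ : ℝ, 0 < δ → ∃ Tδ : ℝ, ∀ t : ℝ, Tδ < t →
      ∃ (p : Fin m → ℤ) (q : Fin n → ℤ), ¬(p = 0 ∧ q = 0) ∧
        (∀ i, |t ^ a i * ((p i : ℝ) + ∑ j, θ i j * (q j : ℝ))|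
            ≤ δ ^ (am * bn / (am + bn))) ∧
        (∀ j, |t ^ (-b j) * (q j : ℝ)| ≤ δ ^ (am * bn / (am + bn))) := by
  intro δ hδ
  have hampos : 0 < am := ham ▸ hapos _
  have hbnpos : 0 < bn := hbn ▸ hbpos _
  set κ : ℝ := am * bn / (am + bn) with hκ
  have hκpos : 0 < κ := div_pos (mul_pos hampos hbnpos) (add_pos hampos hbnpos)
  set δ' : ℝ := min δ 1 with hδ'def
  have hδ'pos : 0 < δ' := lt_min hδ one_pos
  have hδ'le1 : δ' ≤ 1 := min_le_right _ _
  have hδ'leδ : δ' ≤ δ := min_le_left _ _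
  have hlast : δ' ^ κ ≤ δ ^ κ := Real.rpow_le_rpow hδ'pos.le hδ'leδ hκpos.le
  obtain ⟨Tε, hTε⟩ := hsing δ' hδ'pos
  set c : ℝ := δ' ^ (κ / bn) with hc
  have hcpos : 0 < c := Real.rpow_pos_of_pos hδ'pos _
  refine ⟨max 0 (Tε / c), fun t ht => ?_⟩
  have htpos : 0 < t := lt_of_le_of_lt (le_max_left _ _) ht
  have hT : Tε < c * t := by
    have h1 : Tε / c < t := lt_of_le_of_lt (le_max_right _ _) ht
    rw [div_lt_iff₀ hcpos] at h1
    linarith [h1]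
  obtain ⟨p, q, hq0, hp, hq⟩ := hTε (c * t) hT
  have hctpos : 0 < c * t := mul_pos hcpos htpos
  refine ⟨p, q, fun h => hq0 h.2, ?_, ?_⟩
  · intro i
    have hai : 0 < a i := hapos i
    have haige : am ≤ a i := by
      rw [ham]; exact ha (by have := i.isLt; simp [Fin.le_def]; omega)
    have hx : |(p i : ℝ) + ∑ j, θ i j * (q j : ℝ)| ≤ (δ' / (c * t)) ^ (a i) :=
      abs_le_of_rpow_inv_le hai (div_nonneg hδ'pos.le hctpos.le) (hp i)
    have htai : (0:ℝ) < t ^ (a i) := Real.rpow_pos_of_pos htpos _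
    calc |t ^ a i * ((p i : ℝ) + ∑ j, θ i j * (q j : ℝ))|
        = t ^ a i * |(p i : ℝ) + ∑ j, θ i j * (q j : ℝ)| := by
          rw [abs_mul, abs_of_pos htai]
      _ ≤ t ^ a i * (δ' / (c * t)) ^ (a i) :=
          mul_le_mul_of_nonneg_left hx htai.le
      _ = (t * (δ' / (c * t))) ^ (a i) := by
          rw [Real.mul_rpow htpos.le (div_nonneg hδ'pos.le hctpos.le)]
      _ = (δ' / c) ^ (a i) := by
          congr 1; field_simp
      _ = (δ' ^ (κ / am)) ^ (a i) := by
          have h1 : δ' / c = δ' ^ ((1:ℝ) - κ / bn) := by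
            rw [Real.rpow_sub hδ'pos, Real.rpow_one]
          have h2 : (1:ℝ) - κ / bn = κ / am := by
            rw [hκ]; field_simp; ring
          rw [h1, h2]
      _ = δ' ^ (κ / am * a i) := by
          rw [← Real.rpow_mul hδ'pos.le]
      _ ≤ δ' ^ κ := by
          apply Real.rpow_le_rpow_of_exponent_ge hδ'pos hδ'le1
          have : κ / am * am ≤ κ / am * a i :=
            mul_le_mul_of_nonneg_left haige (div_nonneg hκpos.le hampos.le)
          calc κ = κ / am * am := by field_simp
            _ ≤ κ / am * a i := this
      _ ≤ δ ^ κ := hlast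
  · intro j
    have hbj : 0 < b j := hbpos j
    have hbjge : bn ≤ b j := by
      rw [hbn]; exact hb (by have := j.isLt; simp [Fin.le_def]; omega)
    have hx : |(q j : ℝ)| ≤ (c * t) ^ (b j) :=
      abs_le_of_rpow_inv_le hbj hctpos.le (hq j)
    have htbj : (0:ℝ) < t ^ (-b j) := Real.rpow_pos_of_pos htpos _
    calc |t ^ (-b j) * (q j : ℝ)|
        = t ^ (-b j) * |(q j : ℝ)| := by rw [abs_mul, abs_of_pos htbj]
      _ ≤ t ^ (-b j) * (c * t) ^ (b j) := mul_le_mul_of_nonneg_left hx htbj.le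
      _ = c ^ (b j) := by
          rw [Real.mul_rpow hcpos.le htpos.le, ← mul_assoc, mul_comm (t ^ (-b j)) _,
            mul_assoc, ← Real.rpow_add htpos, neg_add_cancel, Real.rpow_zero, mul_one]
      _ = δ' ^ (κ / bn * b j) := by rw [hc, ← Real.rpow_mul hδ'pos.le]
      _ ≤ δ' ^ κ := by
          apply Real.rpow_le_rpow_of_exponent_ge hδ'pos hδ'le1
          have : κ / bn * bn ≤ κ / bn * b j :=
            mul_le_mul_of_nonneg_left hbjge (div_nonneg hκpos.le hbnpos.le)
          calc κ = κ / bn * bn := by field_simp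
            _ ≤ κ / bn * b j := this
      _ ≤ δ ^ κ := hlast
end

section
/- Let 0 < ω < ω′ and suppose θ ∈ M_{m×n}(ℝ) satisfies: there is T_0 such that for all T > T_0 there exist (p,q) ∈ ℤ^m × (ℤ^n ∖ {0}) with max_i |p_i + (θq)_i|^{1/a_i} ≤ T^{−(1+ω′)} and max_j |q_j|^{1/b_j} ≤ T. Then there exists T_θ such that for all τ > T_θ, the lattice g_τ u(θ) ℤ^{m+n} contains a nonzero vector of sup norm at most τ^{−a_m b_n ω/(a_m + b_n + a_m ω)}. -/
set_option maxHeartbeats 1000000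


/-- If `θ` is `(a,b,ω')`-singular with `0 < ω < ω'`, then there is `T_θ` such that for all
`τ > T_θ` the lattice `g_τ u(θ) ℤ^{m+n}` contains a nonzero vector of sup norm at most
`τ^{-a_m b_n ω / (a_m + b_n + a_m ω)}`. -/
theorem stmt_14 (m n : ℕ) (hm : 0 < m) (hn : 0 < n)
    (a : Fin m → ℝ) (b : Fin n → ℝ)
    (ha : Antitone a) (hb : Antitone b)
    (hapos : ∀ i, 0 < a i) (hbpos : ∀ j, 0 < b j)
    (hasum : ∑ i, a i = 1) (hbsum : ∑ j, b j = 1)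
    (am bn : ℝ)
    (ham : am = a ⟨m - 1, Nat.sub_lt hm Nat.one_pos⟩)
    (hbn : bn = b ⟨n - 1, Nat.sub_lt hn Nat.one_pos⟩)
    (ω ω' : ℝ) (hω : 0 < ω) (hωω' : ω < ω')
    (θ : Fin m → Fin n → ℝ)
    (hsing : ∃ T₀ : ℝ, ∀ T : ℝ, T₀ < T →
      ∃ (p : Fin m → ℤ) (q : Fin n → ℤ), q ≠ 0 ∧
        (∀ i, |(p i : ℝ) + ∑ j, θ i j * (q j : ℝ)| ^ (a i)⁻¹ ≤ T ^ (-(1 + ω'))) ∧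
        (∀ j, |(q j : ℝ)| ^ (b j)⁻¹ ≤ T)) :
    ∃ Tθ : ℝ, ∀ τ : ℝ, Tθ < τ →
      ∃ (p : Fin m → ℤ) (q : Fin n → ℤ), ¬(p = 0 ∧ q = 0) ∧
        (∀ i, |τ ^ a i * ((p i : ℝ) + ∑ j, θ i j * (q j : ℝ))|
            ≤ τ ^ (-(am * bn * ω / (am + bn + am * ω)))) ∧
        (∀ j, |τ ^ (-b j) * (q j : ℝ)| ≤ τ ^ (-(am * bn * ω / (am + bn + am * ω)))) := by
  obtain ⟨T₀, hT₀⟩ := hsing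
  have ham0 : 0 < am := ham ▸ hapos _
  have hbn0 : 0 < bn := hbn ▸ hbpos _
  set D := am + bn with hDdef
  set S := am + bn + am * ω with hSdef
  have hD : 0 < D := by positivity
  have hS : 0 < S := by rw [hSdef]; positivity
  have hai : ∀ i, am ≤ a i := by
    intro i
    rw [ham]
    exact ha (Fin.le_def.2 (Nat.le_pred_of_lt i.isLt))
  have hbj : ∀ j, bn ≤ b j := by
    intro j
    rw [hbn]
    exact hb (Fin.le_def.2 (Nat.le_pred_of_lt j.isLt))
  refine ⟨max 1 ((max T₀ 1) ^ (S / D)), fun τ hτ => ?_⟩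
  have hτ1 : 1 < τ := lt_of_le_of_lt (le_max_left _ _) hτ
  have hτ0 : 0 < τ := by linarith
  set T := τ ^ (D / S) with hTdef
  have hT1 : 1 < T :=
    (Real.one_lt_rpow_iff_of_pos hτ0).2 (Or.inl ⟨hτ1, by positivity⟩)
  have hT0 : 0 < T := by linarith
  have hτT : τ = T ^ (S / D) := by
    rw [hTdef, ← Real.rpow_mul hτ0.le, div_mul_div_comm, mul_comm S D,
      div_self (by positivity), Real.rpow_one]
  have hτpow : ∀ e : ℝ, τ ^ e = T ^ (S / D * e) := by
    intro e
    conv_lhs => rw [hτT]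
    rw [← Real.rpow_mul hT0.le]
  have hTgt : T₀ < T := by
    have h1 : (max T₀ 1 : ℝ) ^ (S / D) < τ := lt_of_le_of_lt (le_max_right _ _) hτ
    have h2 : ((max T₀ 1 : ℝ) ^ (S / D)) ^ (D / S) < τ ^ (D / S) :=
      Real.rpow_lt_rpow (by positivity) h1 (by positivity)
    rw [← Real.rpow_mul (by positivity), div_mul_div_comm, mul_comm D S,
      div_self (by positivity), Real.rpow_one] at h2
    exact lt_of_le_of_lt (le_max_left _ _) h2
  obtain ⟨p, q, hq, hp1, hq1⟩ := hT₀ T hTgt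
  have hexpeq : S / D * (-(am * bn * ω / S)) = -(am * bn * ω) / D := by
    field_simp
  refine ⟨p, q, fun h => hq h.2, ?_, ?_⟩
  · intro i
    set x := (p i : ℝ) + ∑ j, θ i j * (q j : ℝ) with hx
    have h1 : |x| ≤ T ^ (-(1 + ω') * a i) := by
      have h := Real.rpow_le_rpow (by positivity) (hp1 i) (hapos i).le
      rwa [← Real.rpow_mul (abs_nonneg _), inv_mul_cancel₀ (hapos i).ne', Real.rpow_one,
        ← Real.rpow_mul hT0.le] at h
    have h2 : S - (1 + ω') * D ≤ -(ω * bn) := by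
      nlinarith [mul_pos ham0 (sub_pos.2 hωω'), mul_pos hbn0 (sub_pos.2 hωω'), hDdef, hSdef]
    have h3 : a i * (S - (1 + ω') * D) ≤ a i * (-(ω * bn)) :=
      mul_le_mul_of_nonneg_left h2 (hapos i).le
    have h4 : a i * (-(ω * bn)) ≤ am * (-(ω * bn)) :=
      mul_le_mul_of_nonpos_right (hai i) (by nlinarith)
    have hnum : S * a i + -(1 + ω') * a i * D ≤ -(am * bn * ω) := by
      have e : S * a i + -(1 + ω') * a i * D = a i * (S - (1 + ω') * D) := by ring
      rw [e]; nlinarith [h3, h4]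
    have hE : S / D * a i + -(1 + ω') * a i ≤ S / D * (-(am * bn * ω / S)) := by
      rw [hexpeq]
      have e1 : S / D * a i + -(1 + ω') * a i = (S * a i + -(1 + ω') * a i * D) / D := by
        field_simp
      rw [e1]
      exact (div_le_div_iff_of_pos_right hD).2 hnum
    calc |τ ^ a i * x| = τ ^ a i * |x| := by
          rw [abs_mul, abs_of_pos (Real.rpow_pos_of_pos hτ0 _)]
      _ ≤ τ ^ a i * T ^ (-(1 + ω') * a i) :=
          mul_le_mul_of_nonneg_left h1 (Real.rpow_pos_of_pos hτ0 _).le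
      _ = T ^ (S / D * a i + -(1 + ω') * a i) := by
          rw [hτpow (a i), ← Real.rpow_add hT0]
      _ ≤ T ^ (S / D * (-(am * bn * ω / S))) := (Real.rpow_le_rpow_left_iff hT1).2 hE
      _ = τ ^ (-(am * bn * ω / S)) := (hτpow _).symm
  · intro j
    have h1 : |(q j : ℝ)| ≤ T ^ (b j) := by
      have h := Real.rpow_le_rpow (by positivity) (hq1 j) (hbpos j).le
      rwa [← Real.rpow_mul (abs_nonneg _), inv_mul_cancel₀ (hbpos j).ne', Real.rpow_one] at h
    have h4 : bn * (am * ω) ≤ b j * (am * ω) :=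
      mul_le_mul_of_nonneg_right (hbj j) (by positivity)
    have hnum : S * (-b j) + b j * D ≤ -(am * bn * ω) := by
      have e : S * (-b j) + b j * D = -(b j * (am * ω)) := by rw [hSdef, hDdef]; ring
      rw [e]; linarith [h4]
    have hE : S / D * (-b j) + b j ≤ S / D * (-(am * bn * ω / S)) := by
      rw [hexpeq]
      have e1 : S / D * (-b j) + b j = (S * (-b j) + b j * D) / D := by
        field_simp
      rw [e1]
      exact (div_le_div_iff_of_pos_right hD).2 hnum
    calc |τ ^ (-b j) * (q j : ℝ)| = τ ^ (-b j) * |(q j : ℝ)| := by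
          rw [abs_mul, abs_of_pos (Real.rpow_pos_of_pos hτ0 _)]
      _ ≤ τ ^ (-b j) * T ^ (b j) :=
          mul_le_mul_of_nonneg_left h1 (Real.rpow_pos_of_pos hτ0 _).le
      _ = T ^ (S / D * (-b j) + b j) := by
          rw [hτpow (-b j), ← Real.rpow_add hT0]
      _ ≤ T ^ (S / D * (-(am * bn * ω / S))) := (Real.rpow_le_rpow_left_iff hT1).2 hE
      _ = τ ^ (-(am * bn * ω / S)) := (hτpow _).symm
end

section
/- Let Z ⊆ M_{m×n}(ℝ) and suppose t > 1, ε > 0, B > 0, C > 0, and N ∈ ℕ are such that for all integers M > N, Σ_{R ∈ F(M), R ∩ Z ≠ ∅} μ(R) ≤ C B^M t^{−Mε}, where F(M) is the generation-M cylinder cover of the product fractal K by products of cylinders of diameters comparable to t^{−M(a_i + b_j)} in the (i,j) coordinate, and μ(R) is the same for all R ∈ F(M) within each product family. Then dim_P(Z ∩ K) ≤ s − (1/(a_1+b_1))(ε − log B / log t), where s = dim_H(K). -/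
set_option linter.unusedSectionVars false


open MeasureTheory Classical
open scoped ENNReal NNReal

/-- Packing premeasure. -/
noncomputable def prePack {X : Type*} [MetricSpace X] (i : ℝ) (F : Set X) : ℝ≥0∞ :=
  ⨅ (ε : ℝ) (_ : 0 < ε),
    ⨆ (x : ℕ → X) (r : ℕ → ℝ) (S : Set ℕ)
      (_ : ∀ j ∈ S, x j ∈ F) (_ : ∀ j ∈ S, 0 ≤ r j) (_ : ∀ j ∈ S, 2 * r j < ε)
      (_ : S.Pairwise fun j k =>
        Disjoint (Metric.closedBall (x j) (r j)) (Metric.closedBall (x k) (r k))),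
      ∑' j : S, ENNReal.ofReal ((2 * r (j : ℕ)) ^ i)

/-- Packing measure. -/
noncomputable def packMeasure {X : Type*} [MetricSpace X] (i : ℝ) (F : Set X) : ℝ≥0∞ :=
  ⨅ (C : ℕ → Set X) (_ : F ⊆ ⋃ j, C j), ∑' j, prePack i (C j)

/-- Packing dimension. -/
noncomputable def dimP {X : Type*} [MetricSpace X] (F : Set X) : ℝ≥0∞ :=
  ⨅ (i : ℝ≥0) (_ : packMeasure (i : ℝ) F = 0), (i : ℝ≥0∞)

/-- The level-`l` cylinder of the IFS `x ↦ c x + w e` determined by a word `ωl`: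
`φ_{e_1} ∘ … ∘ φ_{e_l} (K)`. -/
def cylImage {α : Type*} (c : ℝ) (w : α → ℝ) (K : Set ℝ) (ωl : List α) : Set ℝ :=
  (fun x => ωl.foldr (fun e y => c * y + w e) x) '' K

section IFS
variable {α : Type*} [Fintype α] [Nonempty α] (c : ℝ) (w : α → ℝ)

lemma ifs_summable (hc0 : 0 < c) (hc1 : c < 1) (bs : ℕ → α) :
    Summable fun k => c ^ k * w (bs k) := by
  obtain ⟨W, hW⟩ : ∃ W, ∀ e, |w e| ≤ W := Finite.exists_le _
  apply Summable.of_norm_bounded (g := fun k => c ^ k * W)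
  · exact (summable_geometric_of_lt_one hc0.le hc1).mul_right W
  · intro k
    rw [Real.norm_eq_abs, abs_mul, abs_pow, abs_of_pos hc0]
    exact mul_le_mul_of_nonneg_left (hW (bs k)) (pow_nonneg hc0.le k)

lemma ifs_shift (hc0 : 0 < c) (hc1 : c < 1) (e : α) (bs : ℕ → α) :
    (∑' k : ℕ, c ^ k * w ((fun j => Nat.casesOn j e bs : ℕ → α) k))
      = c * (∑' k : ℕ, c ^ k * w (bs k)) + w e := by
  rw [Summable.tsum_eq_zero_add (ifs_summable c w hc0 hc1 _)]
  simp only [pow_zero, one_mul]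
  rw [add_comm, ← tsum_mul_left]
  congr 1
  exact tsum_congr fun k => by ring

lemma ifs_union (hc0 : 0 < c) (hc1 : c < 1) (K : Set ℝ)
    (hK : K = Set.range fun bs : ℕ → α => ∑' k : ℕ, c ^ k * w (bs k)) :
    K = ⋃ e, (fun x => c * x + w e) '' K := by
  subst hK
  ext x
  simp only [Set.mem_iUnion, Set.mem_image, Set.mem_range]
  constructor
  · rintro ⟨bs, rfl⟩
    refine ⟨bs 0, ∑' k, c ^ k * w (bs (k + 1)), ⟨fun k => bs (k + 1), rfl⟩, ?_⟩
    have := ifs_shift c w hc0 hc1 (bs 0) (fun k => bs (k + 1))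
    simp only at this ⊢
    rw [← this]
    congr 1
    funext k
    cases k <;> rfl
  · rintro ⟨e, y, ⟨bs, rfl⟩, rfl⟩
    exact ⟨fun j => Nat.casesOn j e bs, ifs_shift c w hc0 hc1 e bs⟩

lemma ifs_bounded (hc0 : 0 < c) (hc1 : c < 1) (K : Set ℝ)
    (hK : K = Set.range fun bs : ℕ → α => ∑' k : ℕ, c ^ k * w (bs k)) :
    ∃ D : ℝ, 0 ≤ D ∧ ∀ x ∈ K, ∀ y ∈ K, |x - y| ≤ D := by
  obtain ⟨W, hW⟩ : ∃ W, ∀ e, |w e| ≤ W := Finite.exists_le _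
  have hW0 : 0 ≤ W := (abs_nonneg _).trans (hW (Classical.arbitrary α))
  have h1c : 0 < 1 - c := by linarith
  refine ⟨2 * W / (1 - c), by positivity, ?_⟩
  subst hK
  rintro x ⟨bs, rfl⟩ y ⟨bs', rfl⟩
  simp only
  rw [← Summable.tsum_sub (ifs_summable c w hc0 hc1 bs) (ifs_summable c w hc0 hc1 bs')]
  have hsub := (ifs_summable c w hc0 hc1 bs).sub (ifs_summable c w hc0 hc1 bs')
  have h1 : ∀ k, ‖c ^ k * w (bs k) - c ^ k * w (bs' k)‖ ≤ c ^ k * (2 * W) := by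
    intro k
    rw [← mul_sub, Real.norm_eq_abs, abs_mul, abs_pow, abs_of_pos hc0]
    refine mul_le_mul_of_nonneg_left ?_ (pow_nonneg hc0.le k)
    calc |w (bs k) - w (bs' k)| ≤ |w (bs k)| + |w (bs' k)| := abs_sub _ _
      _ ≤ W + W := add_le_add (hW _) (hW _)
      _ = 2 * W := by ring
  calc |∑' k, (c ^ k * w (bs k) - c ^ k * w (bs' k))|
      ≤ ∑' k, c ^ k * (2 * W) := by
        refine (norm_tsum_le_tsum_norm hsub.norm).trans (Summable.tsum_le_tsum h1 hsub.norm ?_)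
        exact (summable_geometric_of_lt_one hc0.le hc1).mul_right _
    _ = 2 * W / (1 - c) := by
        rw [tsum_mul_right, tsum_geometric_of_lt_one hc0.le hc1]
        field_simp

end IFS

section Cyl
variable {α : Type*} [Fintype α] [Nonempty α] (c : ℝ) (w : α → ℝ) (K : Set ℝ)

lemma cylImage_nil : cylImage c w K [] = K := by
  simp [cylImage]

lemma cylImage_cons (e : α) (l : List α) :
    cylImage c w K (e :: l) = (fun x => c * x + w e) '' cylImage c w K l := by
  simp only [cylImage, List.foldr_cons, Set.image_image]

lemma cylImage_subset (hc0 : 0 < c) (hc1 : c < 1)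
    (hK : K = Set.range fun bs : ℕ → α => ∑' k : ℕ, c ^ k * w (bs k)) (l : List α) :
    cylImage c w K l ⊆ K := by
  induction l with
  | nil => rw [cylImage_nil]
  | cons e l ih =>
    rw [cylImage_cons]
    refine (Set.image_mono ih).trans ?_
    conv_rhs => rw [ifs_union c w hc0 hc1 K hK]
    exact Set.subset_iUnion (fun e => (fun x => c * x + w e) '' K) e

lemma cylImage_exists_word (hc0 : 0 < c) (hc1 : c < 1)
    (hK : K = Set.range fun bs : ℕ → α => ∑' k : ℕ, c ^ k * w (bs k)) (l : ℕ)
    {x : ℝ} (hx : x ∈ K) : ∃ f : Fin l → α, x ∈ cylImage c w K (List.ofFn f) := by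
  induction l generalizing x with
  | zero => exact ⟨fun i => i.elim0, by simpa [cylImage_nil] using hx⟩
  | succ l ih =>
    rw [ifs_union c w hc0 hc1 K hK] at hx
    obtain ⟨e, y, hy, rfl⟩ := Set.mem_iUnion.1 hx
    obtain ⟨f, hf⟩ := ih hy
    refine ⟨Fin.cons e f, ?_⟩
    rw [List.ofFn_succ]
    simp only [Fin.cons_zero, Fin.cons_succ]
    rw [cylImage_cons]
    refine ⟨y, ?_, rfl⟩
    simpa [Function.comp] using hf

lemma cylImage_append (l1 l2 : List α) :
    cylImage c w K (l1 ++ l2) =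
      (fun x => l1.foldr (fun e y => c * y + w e) x) '' cylImage c w K l2 := by
  simp only [cylImage, List.foldr_append, Set.image_image]

lemma cylImage_prefix (hc0 : 0 < c) (hc1 : c < 1)
    (hK : K = Set.range fun bs : ℕ → α => ∑' k : ℕ, c ^ k * w (bs k))
    (l1 l2 : List α) : cylImage c w K (l1 ++ l2) ⊆ cylImage c w K l1 := by
  rw [cylImage_append]
  exact Set.image_mono (cylImage_subset c w K hc0 hc1 hK l2)

lemma foldr_affine (l : List α) (x y : ℝ) :
    l.foldr (fun e y => c * y + w e) x - l.foldr (fun e y => c * y + w e) y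
      = c ^ l.length * (x - y) := by
  induction l with
  | nil => simp
  | cons e l ih =>
    simp only [List.foldr_cons, List.length_cons, pow_succ]
    rw [mul_comm (c ^ l.length) c, mul_assoc, ← ih]
    ring

lemma cylImage_dist (D : ℝ) (hD : ∀ x ∈ K, ∀ y ∈ K, |x - y| ≤ D)
    (hc0 : 0 < c) (l : List α) {u v : ℝ}
    (hu : u ∈ cylImage c w K l) (hv : v ∈ cylImage c w K l) :
    |u - v| ≤ c ^ l.length * D := by
  obtain ⟨x, hx, rfl⟩ := hu
  obtain ⟨y, hy, rfl⟩ := hv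
  simp only
  rw [foldr_affine, abs_mul, abs_pow, abs_of_pos hc0]
  exact mul_le_mul_of_nonneg_left (hD x hx y hy) (pow_nonneg hc0.le _)

end Cyl

set_option maxHeartbeats 1000000 in
lemma cover_lemma (m n : ℕ) (hm : 0 < m) (hn : 0 < n)
    (a : Fin m → ℝ) (b : Fin n → ℝ) (ha : Antitone a) (hb : Antitone b)
    (E : Fin m → Fin n → Type) [∀ i j, Fintype (E i j)] [∀ i j, Nonempty (E i j)]
    (hcard : ∀ i j, 2 ≤ Fintype.card (E i j))
    (c : Fin m → Fin n → ℝ) (hc0 : ∀ i j, 0 < c i j) (hc1 : ∀ i j, c i j < 1)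
    (w : ∀ i j, E i j → ℝ)
    (K : Fin m → Fin n → Set ℝ)
    (hK : ∀ i j, K i j = Set.range fun bs : ℕ → E i j => ∑' k : ℕ, (c i j) ^ k * w i j (bs k))
    (t : ℝ) (ht : 1 < t) (ε B C : ℝ) (hB : 0 < B) (hC : 0 < C) (N : ℕ)
    (hα : 0 < a ⟨0, hm⟩ + b ⟨0, hn⟩)
    (NM : ℕ → Fin m → Fin n → ℕ)
    (hNM : ∀ M i j, (c i j) ^ (NM M i j + 1) < t ^ (-(M : ℝ) * (a i + b j)) ∧
      t ^ (-(M : ℝ) * (a i + b j)) ≤ (c i j) ^ (NM M i j))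
    (μ : Measure (Fin m → Fin n → ℝ))
    (hμcyl : ∀ (M : ℕ) (ω : ∀ i j, Fin (NM M i j) → E i j),
      μ {θ | ∀ i j, θ i j ∈ cylImage (c i j) (w i j) (K i j) (List.ofFn (ω i j))}
        = ∏ i, ∏ j, ((Fintype.card (E i j) : ℝ≥0∞))⁻¹ ^ NM M i j)
    (Z : Set (Fin m → Fin n → ℝ))
    (hcount : ∀ M : ℕ, N < M →
      ∑ ω : ∀ i j, Fin (NM M i j) → E i j,
        (if ({θ : Fin m → Fin n → ℝ |
              ∀ i j, θ i j ∈ cylImage (c i j) (w i j) (K i j) (List.ofFn (ω i j))} ∩ Z).Nonempty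
          then μ {θ | ∀ i j, θ i j ∈ cylImage (c i j) (w i j) (K i j) (List.ofFn (ω i j))}
          else 0)
        ≤ ENNReal.ofReal (C * B ^ M * t ^ (-(M : ℝ) * ε))) :
    ∃ A : ℝ, 0 < A ∧ ∀ δ : ℝ, 0 < δ → δ < 1 →
      ∃ (G : ℕ) (T : Fin G → Set (Fin m → Fin n → ℝ)),
        (Z ∩ {θ : Fin m → Fin n → ℝ | ∀ i j, θ i j ∈ K i j} ⊆ ⋃ v, T v) ∧
        (∀ v, ∀ x ∈ T v, ∀ y ∈ T v, dist x y ≤ δ) ∧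
        (G : ℝ) ≤ A * δ ^ ((ε - Real.log B / Real.log t) / (a ⟨0, hm⟩ + b ⟨0, hn⟩)
          - ∑ i, ∑ j, (-Real.log (Fintype.card (E i j)) / Real.log (c i j))) := by
  classical
  have ht0 : (0:ℝ) < t := lt_trans one_pos ht
  have hτ : 0 < Real.log t := Real.log_pos ht
  set τ : ℝ := Real.log t with hτdef
  set α0 : ℝ := a ⟨0, hm⟩ + b ⟨0, hn⟩ with hα0def
  set γ : ℝ := ε - Real.log B / τ with hγdef
  set sd : Fin m → Fin n → ℝ :=
    fun i j => -Real.log (Fintype.card (E i j)) / Real.log (c i j) with hsddef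
  have hlogc : ∀ i j, Real.log (c i j) < 0 := fun i j => Real.log_neg (hc0 i j) (hc1 i j)
  have hcard1 : ∀ i j, (1:ℝ) < (Fintype.card (E i j) : ℝ) := by
    intro i j
    exact_mod_cast lt_of_lt_of_le one_lt_two (by exact_mod_cast hcard i j)
  have hcardpos : ∀ i j, (0:ℝ) < (Fintype.card (E i j) : ℝ) :=
    fun i j => lt_trans one_pos (hcard1 i j)
  have hlogcard : ∀ i j, 0 < Real.log (Fintype.card (E i j)) :=
    fun i j => Real.log_pos (hcard1 i j)
  have hsd : ∀ i j, 0 < sd i j := by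
    intro i j
    rw [hsddef]
    exact div_pos_of_neg_of_neg (neg_lt_zero.2 (hlogcard i j)) (hlogc i j)
  -- diameters
  have hDex : ∀ i j, ∃ D : ℝ, 0 ≤ D ∧ ∀ x ∈ K i j, ∀ y ∈ K i j, |x - y| ≤ D :=
    fun i j => ifs_bounded (c i j) (w i j) (hc0 i j) (hc1 i j) (K i j) (hK i j)
  choose D hD0 hDb using hDex
  set D' : Fin m → Fin n → ℝ := fun i j => max (D i j) 1 with hD'def
  have hD'1 : ∀ i j, (1:ℝ) ≤ D' i j := fun i j => le_max_right _ _
  have hD'0 : ∀ i j, (0:ℝ) < D' i j := fun i j => lt_of_lt_of_le one_pos (hD'1 i j)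
  have hDD' : ∀ i j, D i j ≤ D' i j := fun i j => le_max_left _ _
  -- constants
  set κ : ℝ := t ^ ((-((N:ℝ)+2)) * α0) with hκdef
  have hκ0 : 0 < κ := Real.rpow_pos_of_pos ht0 _
  set κ' : Fin m → Fin n → ℝ := fun i j => min κ (c i j / D' i j) with hκ'def
  have hκ'0 : ∀ i j, 0 < κ' i j :=
    fun i j => lt_min hκ0 (div_pos (hc0 i j) (hD'0 i j))
  set A2 : ℝ := ∏ i, ∏ j, (κ' i j) ^ (-(sd i j)) with hA2def
  have hA20 : 0 < A2 := by
    rw [hA2def]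
    exact Finset.prod_pos fun i _ => Finset.prod_pos
      fun j _ => Real.rpow_pos_of_pos (hκ'0 i j) _
  set A1 : ℝ := max 1 (κ ^ (γ / α0)) with hA1def
  have hA11 : (1:ℝ) ≤ A1 := le_max_left _ _
  have hA10 : 0 < A1 := lt_of_lt_of_le one_pos hA11
  refine ⟨C * A1 * A2, by positivity, ?_⟩
  intro δ hδ0 hδ1
  -- choice of M
  have hlogδ : Real.log δ < 0 := Real.log_neg hδ0 hδ1
  set x : ℝ := (-Real.log δ) / (α0 * τ) with hxdef
  have hx0 : 0 < x := div_pos (by linarith) (by positivity)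
  set M : ℕ := N + 1 + ⌈x⌉₊ with hMdef
  have hMN : N < M := by omega
  have hM1 : (N:ℝ) + 1 + x ≤ (M:ℝ) := by
    rw [hMdef]
    push_cast
    have := Nat.le_ceil x
    linarith
  have hM2 : (M:ℝ) < (N:ℝ) + 2 + x := by
    rw [hMdef]
    push_cast
    have := Nat.ceil_lt_add_one hx0.le
    linarith
  have hxατ : x * (α0 * τ) = -Real.log δ := by
    rw [hxdef]; field_simp
  have htexp : ∀ y : ℝ, t ^ y = Real.exp (τ * y) := fun y => Real.rpow_def_of_pos ht0 y
  have htδ1 : t ^ (-(M:ℝ) * α0) ≤ δ := by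
    rw [htexp]
    conv_rhs => rw [← Real.exp_log hδ0]
    apply Real.exp_le_exp.2
    nlinarith [hx0.le, hτ, hα, mul_pos hα hτ]
  have htδ2 : κ * δ ≤ t ^ (-(M:ℝ) * α0) := by
    rw [htexp, hκdef, htexp]
    nth_rewrite 1 [← Real.exp_log hδ0]
    rw [← Real.exp_add]
    apply Real.exp_le_exp.2
    nlinarith [hτ, hα, mul_pos hα hτ]
  have habα : ∀ (i : Fin m) (j : Fin n), a i + b j ≤ α0 := by
    intro i j
    rw [hα0def]
    have h1 : a i ≤ a ⟨0, hm⟩ := ha (by simp [Fin.le_def])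
    have h2 : b j ≤ b ⟨0, hn⟩ := hb (by simp [Fin.le_def])
    linarith
  have hcNM : ∀ i j, t ^ (-(M:ℝ) * α0) ≤ c i j ^ NM M i j := by
    intro i j
    refine le_trans ?_ (hNM M i j).2
    apply Real.rpow_le_rpow_of_exponent_le ht.le
    have := habα i j
    nlinarith [Nat.cast_nonneg (α := ℝ) M]
  -- refinement levels
  have hfind : ∀ i j, ∃ q : ℕ, (c i j) ^ (NM M i j + q) * D' i j ≤ δ := by
    intro i j
    obtain ⟨k0, hk0⟩ := exists_pow_lt_of_lt_one (div_pos hδ0 (hD'0 i j)) (hc1 i j)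
    refine ⟨k0, ?_⟩
    have h1 : (c i j) ^ (NM M i j + k0) ≤ (c i j) ^ k0 := by
      rw [pow_add]
      calc c i j ^ NM M i j * c i j ^ k0 ≤ 1 * c i j ^ k0 := by
            apply mul_le_mul_of_nonneg_right _ (pow_nonneg (hc0 i j).le _)
            exact pow_le_one₀ (hc0 i j).le (hc1 i j).le
        _ = c i j ^ k0 := one_mul _
    calc (c i j) ^ (NM M i j + k0) * D' i j ≤ (c i j) ^ k0 * D' i j :=
          mul_le_mul_of_nonneg_right h1 (hD'0 i j).le
      _ ≤ (δ / D' i j) * D' i j := mul_le_mul_of_nonneg_right hk0.le (hD'0 i j).le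
      _ = δ := div_mul_cancel₀ _ (hD'0 i j).ne'
  set p : Fin m → Fin n → ℕ := fun i j => Nat.find (hfind i j) with hpdef
  have hp1 : ∀ i j, (c i j) ^ (NM M i j + p i j) * D' i j ≤ δ :=
    fun i j => Nat.find_spec (hfind i j)
  have hp2 : ∀ i j, κ' i j * δ ≤ (c i j) ^ (NM M i j + p i j) := by
    intro i j
    by_cases hp : p i j = 0
    · rw [hp, add_zero]
      calc κ' i j * δ ≤ κ * δ :=
            mul_le_mul_of_nonneg_right (min_le_left _ _) hδ0.le
        _ ≤ t ^ (-(M:ℝ) * α0) := htδ2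
        _ ≤ c i j ^ NM M i j := hcNM i j
    · have hplt : p i j - 1 < p i j := Nat.sub_lt (Nat.pos_of_ne_zero hp) one_pos
      have hmin := Nat.find_min (hfind i j) hplt
      push_neg at hmin
      have hrw : NM M i j + p i j = (NM M i j + (p i j - 1)) + 1 := by omega
      rw [hrw, pow_succ]
      have h1 : δ / D' i j < c i j ^ (NM M i j + (p i j - 1)) := by
        rw [div_lt_iff₀ (hD'0 i j)]
        exact hmin
      calc κ' i j * δ ≤ (c i j / D' i j) * δ :=
            mul_le_mul_of_nonneg_right (min_le_right _ _) hδ0.le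
        _ = (δ / D' i j) * c i j := by ring
        _ ≤ c i j ^ (NM M i j + (p i j - 1)) * c i j :=
            mul_le_mul_of_nonneg_right h1.le (hc0 i j).le
  -- the cover
  set Tset : (∀ i j, Fin (NM M i j + p i j) → E i j) → Set (Fin m → Fin n → ℝ) :=
    fun ω => {θ | ∀ i j, θ i j ∈ cylImage (c i j) (w i j) (K i j) (List.ofFn (ω i j))}
    with hTsetdef
  set cond0 : (∀ i j, Fin (NM M i j) → E i j) → Prop := fun ω0 =>
    ({θ : Fin m → Fin n → ℝ |
      ∀ i j, θ i j ∈ cylImage (c i j) (w i j) (K i j) (List.ofFn (ω0 i j))} ∩ Z).Nonempty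
    with hcond0def
  set tr : (∀ i j, Fin (NM M i j + p i j) → E i j) → (∀ i j, Fin (NM M i j) → E i j) :=
    fun ω i j k => ω i j (Fin.castAdd (p i j) k) with htrdef
  set V : Finset (∀ i j, Fin (NM M i j + p i j) → E i j) :=
    Finset.univ.filter (fun ω => cond0 (tr ω)) with hVdef
  refine ⟨V.card, fun v => Tset (V.equivFin.symm v), ?_, ?_, ?_⟩
  · -- cover
    rintro θ ⟨hθZ, hθK⟩
    have hex : ∀ i j, ∃ f : Fin (NM M i j + p i j) → E i j,
        θ i j ∈ cylImage (c i j) (w i j) (K i j) (List.ofFn f) :=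
      fun i j => cylImage_exists_word (c i j) (w i j) (K i j) (hc0 i j) (hc1 i j)
        (hK i j) _ (hθK i j)
    choose f hf using hex
    have hprefix : ∀ i j, θ i j ∈ cylImage (c i j) (w i j) (K i j)
        (List.ofFn (tr f i j)) := by
      intro i j
      have hsplit : List.ofFn (f i j) = List.ofFn (tr f i j)
          ++ List.ofFn (fun k => f i j (Fin.natAdd (NM M i j) k)) := by rw [List.ofFn_add]; rfl
      have := hf i j
      rw [hsplit] at this
      exact cylImage_prefix (c i j) (w i j) (K i j) (hc0 i j) (hc1 i j) (hK i j) _ _ this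
    have hmemV : f ∈ V := by
      rw [hVdef, Finset.mem_filter]
      exact ⟨Finset.mem_univ _, ⟨θ, hprefix, hθZ⟩⟩
    refine Set.mem_iUnion.2 ⟨V.equivFin ⟨f, hmemV⟩, ?_⟩
    simp only [Equiv.symm_apply_apply]
    exact hf
  · -- diameter
    intro v θ hθ θ' hθ'
    rw [dist_pi_le_iff hδ0.le]
    intro i
    rw [dist_pi_le_iff hδ0.le]
    intro j
    rw [Real.dist_eq]
    set ω := V.equivFin.symm v
    have h1 := hθ i j
    have h2 := hθ' i j
    have hd := cylImage_dist (c i j) (w i j) (K i j) (D i j) (hDb i j) (hc0 i j)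
      (List.ofFn (ω.1 i j)) h1 h2
    rw [List.length_ofFn] at hd
    calc |θ i j - θ' i j| ≤ c i j ^ (NM M i j + p i j) * D i j := hd
      _ ≤ c i j ^ (NM M i j + p i j) * D' i j :=
          mul_le_mul_of_nonneg_left (hDD' i j) (pow_nonneg (hc0 i j).le _)
      _ ≤ δ := hp1 i j
  · -- counting
    set T0 : Finset (∀ i j, Fin (NM M i j) → E i j) := Finset.univ.filter cond0 with hT0def
    -- card V ≤ card T0 * ∏∏ card ^ p
    have hVcard : V.card ≤ T0.card * ∏ i, ∏ j, Fintype.card (E i j) ^ p i j := by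
      set Φ : (∀ i j, Fin (NM M i j + p i j) → E i j) →
          (∀ i j, Fin (NM M i j) → E i j) × (∀ i j, Fin (p i j) → E i j) :=
        fun ω => (tr ω, fun i j k => ω i j (Fin.natAdd (NM M i j) k)) with hΦdef
      have hinj : Function.Injective Φ := by
        intro ω ω' hωω
        have h1 : tr ω = tr ω' := congrArg Prod.fst hωω
        have h2 : (fun i j k => ω i j (Fin.natAdd (NM M i j) k)) =
            (fun i j k => ω' i j (Fin.natAdd (NM M i j) k)) := congrArg Prod.snd hωω
        funext i j k
        refine Fin.addCases (motive := fun k => ω i j k = ω' i j k) ?_ ?_ k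
        · intro k0
          exact congrFun (congrFun (congrFun h1 i) j) k0
        · intro k1
          exact congrFun (congrFun (congrFun h2 i) j) k1
      calc V.card ≤ (T0 ×ˢ (Finset.univ : Finset (∀ i j, Fin (p i j) → E i j))).card := by
            apply Finset.card_le_card_of_injOn Φ _ hinj.injOn
            intro ω hω
            simp only [Finset.mem_coe, hVdef, Finset.mem_filter] at hω
            rw [Finset.mem_coe, Finset.mem_product]
            exact ⟨by rw [hT0def, Finset.mem_filter]; exact ⟨Finset.mem_univ _, hω.2⟩,
              Finset.mem_univ _⟩
        _ = T0.card * ∏ i, ∏ j, Fintype.card (E i j) ^ p i j := by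
            rw [Finset.card_product, Finset.card_univ]
            congr 1
            rw [Fintype.card_pi]
            congr 1
            funext i
            rw [Fintype.card_pi]
            congr 1
            funext j
            rw [Fintype.card_fun, Fintype.card_fin]
    -- card T0 bound from hcount
    have hT0card : (T0.card : ℝ) ≤ C * B ^ M * t ^ (-(M:ℝ) * ε)
        * ∏ i, ∏ j, (Fintype.card (E i j) : ℝ) ^ NM M i j := by
      have hsum := hcount M hMN
      set P : ℝ≥0∞ := ∏ i, ∏ j, ((Fintype.card (E i j) : ℝ≥0∞))⁻¹ ^ NM M i j with hPdef
      set Q : ℝ≥0∞ := ∏ i, ∏ j, ((Fintype.card (E i j) : ℝ≥0∞)) ^ NM M i j with hQdef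
      have hcard0 : ∀ i j, ((Fintype.card (E i j) : ℝ≥0∞)) ≠ 0 := by
        intro i j
        have h := hcard i j
        simp only [ne_eq, Nat.cast_eq_zero]
        omega
      have hcardtop : ∀ i j, ((Fintype.card (E i j) : ℝ≥0∞)) ≠ ⊤ :=
        fun i j => ENNReal.natCast_ne_top _
      have hPQ : P * Q = 1 := by
        rw [hPdef, hQdef, ← Finset.prod_mul_distrib]
        rw [Finset.prod_congr rfl (fun i _ => (Finset.prod_mul_distrib).symm)]
        apply Finset.prod_eq_one
        intro i _
        apply Finset.prod_eq_one
        intro j _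
        rw [← mul_pow, ENNReal.inv_mul_cancel (hcard0 i j) (hcardtop i j), one_pow]
      have hQtop : Q ≠ ⊤ := by
        rw [hQdef]
        exact (ENNReal.prod_lt_top fun i _ => ENNReal.prod_lt_top fun j _ =>
          (ENNReal.pow_ne_top (hcardtop i j)).lt_top).ne
      have hkey : (T0.card : ℝ≥0∞) * P ≤ ENNReal.ofReal (C * B ^ M * t ^ (-(M:ℝ) * ε)) := by
        refine le_trans (le_of_eq ?_) hsum
        rw [Finset.sum_congr rfl (fun ω _ => by rw [hμcyl M ω])]
        rw [← Finset.sum_filter]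
        rw [Finset.sum_const, nsmul_eq_mul]
      have hkey2 : (T0.card : ℝ≥0∞) ≤ ENNReal.ofReal (C * B ^ M * t ^ (-(M:ℝ) * ε)) * Q := by
        calc (T0.card : ℝ≥0∞) = (T0.card : ℝ≥0∞) * (P * Q) := by rw [hPQ, mul_one]
          _ = ((T0.card : ℝ≥0∞) * P) * Q := by ring
          _ ≤ ENNReal.ofReal (C * B ^ M * t ^ (-(M:ℝ) * ε)) * Q :=
              mul_le_mul_left hkey _
      have hCBt0 : 0 ≤ C * B ^ M * t ^ (-(M:ℝ) * ε) := by positivity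
      have := ENNReal.toReal_le_toReal (a := (T0.card : ℝ≥0∞))
        (b := ENNReal.ofReal (C * B ^ M * t ^ (-(M:ℝ) * ε)) * Q)
        (ENNReal.natCast_ne_top _) (ENNReal.mul_ne_top ENNReal.ofReal_ne_top hQtop)
      have hle := this.2 hkey2
      rw [ENNReal.toReal_natCast, ENNReal.toReal_mul, ENNReal.toReal_ofReal hCBt0] at hle
      refine hle.trans (le_of_eq ?_)
      congr 1
      rw [hQdef, ENNReal.toReal_prod]
      apply Finset.prod_congr rfl
      intro i _
      rw [ENNReal.toReal_prod]
      apply Finset.prod_congr rfl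
      intro j _
      rw [ENNReal.toReal_pow, ENNReal.toReal_natCast]
    -- per-factor estimate
    have hfac : ∀ i j, (Fintype.card (E i j) : ℝ) ^ (NM M i j + p i j)
        ≤ (κ' i j) ^ (-(sd i j)) * δ ^ (-(sd i j)) := by
      intro i j
      have hcl : (0:ℝ) < c i j ^ (NM M i j + p i j) := pow_pos (hc0 i j) _
      have key : (Fintype.card (E i j) : ℝ) ^ (NM M i j + p i j)
          = (c i j ^ (NM M i j + p i j)) ^ (-(sd i j)) := by
        rw [Real.rpow_def_of_pos hcl, Real.log_pow]
        have harith : ((NM M i j + p i j : ℕ):ℝ) * Real.log (c i j) * (-(sd i j))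
            = ((NM M i j + p i j : ℕ):ℝ) * Real.log (Fintype.card (E i j)) := by
          rw [hsddef]
          have hne : Real.log (c i j) ≠ 0 := (hlogc i j).ne
          field_simp
        rw [harith, Real.exp_nat_mul, Real.exp_log (hcardpos i j)]
      rw [key, ← Real.mul_rpow (hκ'0 i j).le hδ0.le]
      exact Real.rpow_le_rpow_of_nonpos (mul_pos (hκ'0 i j) hδ0) (hp2 i j)
        (neg_nonpos.2 (hsd i j).le)
    -- B^M t^{-Mε} estimate
    have hBt : B ^ M * t ^ (-(M:ℝ) * ε) ≤ A1 * δ ^ (γ / α0) := by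
      have hBM : B ^ M * t ^ (-(M:ℝ) * ε) = t ^ (-(M:ℝ) * γ) := by
        rw [htexp, htexp]
        nth_rewrite 1 [← Real.exp_log hB]
        rw [← Real.exp_nat_mul, ← Real.exp_add]
        congr 1
        rw [hγdef]
        field_simp
        ring
      have hpow : t ^ (-(M:ℝ) * γ) = (t ^ (-(M:ℝ) * α0)) ^ (γ / α0) := by
        rw [← Real.rpow_mul ht0.le]
        congr 1
        field_simp
      rw [hBM, hpow]
      rcases le_or_gt 0 γ with hγpos | hγneg
      · calc (t ^ (-(M:ℝ) * α0)) ^ (γ / α0) ≤ δ ^ (γ / α0) :=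
            Real.rpow_le_rpow (Real.rpow_nonneg ht0.le _) htδ1 (div_nonneg hγpos hα.le)
          _ ≤ A1 * δ ^ (γ / α0) := le_mul_of_one_le_left (Real.rpow_nonneg hδ0.le _) hA11
      · calc (t ^ (-(M:ℝ) * α0)) ^ (γ / α0) ≤ (κ * δ) ^ (γ / α0) :=
            Real.rpow_le_rpow_of_nonpos (mul_pos hκ0 hδ0) htδ2
              (div_nonpos_of_nonpos_of_nonneg hγneg.le hα.le)
          _ = κ ^ (γ / α0) * δ ^ (γ / α0) := Real.mul_rpow hκ0.le hδ0.le
          _ ≤ A1 * δ ^ (γ / α0) :=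
            mul_le_mul_of_nonneg_right (le_max_right _ _) (Real.rpow_nonneg hδ0.le _)
    -- assemble
    have hprodbound : ∏ i, ∏ j, (Fintype.card (E i j) : ℝ) ^ (NM M i j + p i j)
        ≤ A2 * δ ^ (-(∑ i, ∑ j, sd i j)) := by
      have h1 : ∏ i, ∏ j, (Fintype.card (E i j) : ℝ) ^ (NM M i j + p i j)
          ≤ ∏ i, ∏ j, ((κ' i j) ^ (-(sd i j)) * δ ^ (-(sd i j))) := by
        apply Finset.prod_le_prod
        · intro i _
          exact Finset.prod_nonneg fun j _ => by positivity
        · intro i _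
          apply Finset.prod_le_prod
          · intro j _
            positivity
          · intro j _
            exact hfac i j
      refine h1.trans (le_of_eq ?_)
      rw [hA2def]
      rw [Finset.prod_congr rfl (fun i (_ : i ∈ Finset.univ) => Finset.prod_mul_distrib),
        Finset.prod_mul_distrib]
      congr 1
      rw [← Finset.sum_neg_distrib]
      rw [Real.rpow_sum_of_pos hδ0]
      apply Finset.prod_congr rfl
      intro i _
      rw [← Finset.sum_neg_distrib]
      rw [Real.rpow_sum_of_pos hδ0]
    -- final chain
    have hfinal : (V.card : ℝ) ≤ (C * A1 * A2) * δ ^ (γ / α0 - ∑ i, ∑ j, sd i j) := by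
      have hc1' : (V.card : ℝ) ≤ (T0.card : ℝ) * ∏ i, ∏ j, (Fintype.card (E i j) : ℝ) ^ p i j := by
        have : ((T0.card * ∏ i, ∏ j, Fintype.card (E i j) ^ p i j : ℕ) : ℝ)
            = (T0.card : ℝ) * ∏ i, ∏ j, (Fintype.card (E i j) : ℝ) ^ p i j := by
          push_cast
          ring
        rw [← this]
        exact_mod_cast hVcard
      have hQp0 : (0:ℝ) ≤ ∏ i, ∏ j, (Fintype.card (E i j) : ℝ) ^ p i j :=
        Finset.prod_nonneg fun i _ => Finset.prod_nonneg fun j _ => by positivity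
      calc (V.card : ℝ)
          ≤ (T0.card : ℝ) * ∏ i, ∏ j, (Fintype.card (E i j) : ℝ) ^ p i j := hc1'
        _ ≤ (C * B ^ M * t ^ (-(M:ℝ) * ε)
              * ∏ i, ∏ j, (Fintype.card (E i j) : ℝ) ^ NM M i j)
              * ∏ i, ∏ j, (Fintype.card (E i j) : ℝ) ^ p i j :=
            mul_le_mul_of_nonneg_right hT0card hQp0
        _ = C * (B ^ M * t ^ (-(M:ℝ) * ε))
              * ∏ i, ∏ j, (Fintype.card (E i j) : ℝ) ^ (NM M i j + p i j) := by
            rw [Finset.prod_congr rfl (fun i (_ : i ∈ Finset.univ) =>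
              Finset.prod_congr rfl fun j (_ : j ∈ Finset.univ) => pow_add _ _ _)]
            rw [Finset.prod_congr rfl (fun i (_ : i ∈ Finset.univ) =>
              Finset.prod_mul_distrib), Finset.prod_mul_distrib]
            ring
        _ ≤ C * (A1 * δ ^ (γ / α0)) * (A2 * δ ^ (-(∑ i, ∑ j, sd i j))) := by
            apply mul_le_mul
            · exact mul_le_mul_of_nonneg_left hBt hC.le
            · exact hprodbound
            · exact Finset.prod_nonneg fun i _ => Finset.prod_nonneg fun j _ => by positivity
            · positivity
        _ = (C * A1 * A2) * δ ^ (γ / α0 - ∑ i, ∑ j, sd i j) := by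
            rw [sub_eq_add_neg, Real.rpow_add hδ0]
            ring
    exact hfinal


/-- Balls at distance at most the sum of radii intersect (in a normed space). -/
lemma balls_meet {X : Type*} [NormedAddCommGroup X] [NormedSpace ℝ X]
    (x1 x2 : X) (r1 r2 : ℝ) (h1 : 0 < r1) (h2 : 0 < r2) (hd : dist x1 x2 ≤ r1 + r2) :
    ¬ Disjoint (Metric.closedBall x1 r1) (Metric.closedBall x2 r2) := by
  rw [Set.not_disjoint_iff]
  have hr12 : 0 < r1 + r2 := by linarith
  refine ⟨x1 + (r1 / (r1 + r2)) • (x2 - x1), ?_, ?_⟩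
  · rw [Metric.mem_closedBall, dist_eq_norm]
    have : x1 + (r1 / (r1 + r2)) • (x2 - x1) - x1 = (r1 / (r1 + r2)) • (x2 - x1) := by
      abel
    rw [this, norm_smul, Real.norm_eq_abs, abs_of_nonneg (by positivity)]
    have hn : ‖x2 - x1‖ ≤ r1 + r2 := by
      rw [← dist_eq_norm, dist_comm]
      exact hd
    calc r1 / (r1 + r2) * ‖x2 - x1‖ ≤ r1 / (r1 + r2) * (r1 + r2) := by
          exact mul_le_mul_of_nonneg_left hn (by positivity)
      _ = r1 := by field_simp
  · rw [Metric.mem_closedBall, dist_eq_norm]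
    have : x1 + (r1 / (r1 + r2)) • (x2 - x1) - x2
        = -((r2 / (r1 + r2)) • (x2 - x1)) := by
      have : (r1 / (r1 + r2)) = 1 - (r2 / (r1 + r2)) := by field_simp; ring
      rw [this, sub_smul, one_smul]
      abel
    rw [this, norm_neg, norm_smul, Real.norm_eq_abs, abs_of_nonneg (by positivity)]
    have hn : ‖x2 - x1‖ ≤ r1 + r2 := by
      rw [← dist_eq_norm, dist_comm]
      exact hd
    calc r2 / (r1 + r2) * ‖x2 - x1‖ ≤ r2 / (r1 + r2) * (r1 + r2) := by
          exact mul_le_mul_of_nonneg_left hn (by positivity)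
      _ = r2 := by field_simp

/-- dyadic localization -/
lemma exists_dyadic (ε0 y : ℝ) (hy : 0 < y) (hyε : y < ε0) :
    ∃ k : ℕ, ε0 / 2 ^ (k + 1) < y ∧ y ≤ ε0 / 2 ^ k := by
  set X : ℝ := ε0 / y with hXdef
  have hX1 : 1 < X := (one_lt_div hy).2 hyε
  have hfl1 : 1 ≤ ⌊X⌋₊ := Nat.le_floor (by exact_mod_cast hX1.le)
  set k : ℕ := Nat.log 2 ⌊X⌋₊ with hkdef
  have h2k : (2:ℝ) ^ k ≤ X := by
    have h := Nat.pow_log_le_self 2 (by omega : ⌊X⌋₊ ≠ 0)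
    calc (2:ℝ) ^ k ≤ (⌊X⌋₊ : ℝ) := by exact_mod_cast h
      _ ≤ X := Nat.floor_le (by positivity)
  have hX2 : X < (2:ℝ) ^ (k + 1) := by
    have h1 : X < (⌊X⌋₊ : ℝ) + 1 := Nat.lt_floor_add_one X
    have h2 : ⌊X⌋₊ + 1 ≤ 2 ^ (k + 1) := Nat.lt_pow_succ_log_self (by norm_num) ⌊X⌋₊
    calc X < (⌊X⌋₊ : ℝ) + 1 := h1
      _ ≤ (2:ℝ) ^ (k + 1) := by exact_mod_cast h2
  refine ⟨k, ?_, ?_⟩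
  · rw [div_lt_iff₀ (by positivity)]
    rw [hXdef] at hX2
    rw [div_lt_iff₀ hy] at hX2
    linarith [hX2]
  · rw [le_div_iff₀ (by positivity)]
    rw [hXdef] at h2k
    rw [le_div_iff₀ hy] at h2k
    linarith [h2k]

set_option maxHeartbeats 1000000 in
lemma prePack_zero {X : Type*} [MetricSpace X] (ZK : Set X) (A e : ℝ) (hA : 0 < A)
    (hmeet : ∀ (x1 x2 : X) (r1 r2 : ℝ), 0 < r1 → 0 < r2 → dist x1 x2 ≤ r1 + r2 →
      ¬ Disjoint (Metric.closedBall x1 r1) (Metric.closedBall x2 r2))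
    (hcov : ∀ δ : ℝ, 0 < δ → δ < 1 → ∃ (G : ℕ) (T : Fin G → Set X),
      (ZK ⊆ ⋃ v, T v) ∧ (∀ v, ∀ x ∈ T v, ∀ y ∈ T v, dist x y ≤ δ) ∧ (G : ℝ) ≤ A * δ ^ e)
    (u : ℝ) (hu0 : 0 < u) (hq : 0 < u + e) : prePack u ZK = 0 := by
  classical
  set q : ℝ := u + e with hqdef
  set ρ : ℝ := (2:ℝ) ^ (-q) with hρdef
  have hρ0 : 0 ≤ ρ := Real.rpow_nonneg (by norm_num) _
  have hρ1 : ρ < 1 := Real.rpow_lt_one_of_one_lt_of_neg (by norm_num) (by linarith)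
  have hgeo_ne : (1 - ENNReal.ofReal ρ)⁻¹ ≠ ⊤ := by
    rw [ne_eq, ENNReal.inv_eq_top]
    intro h
    rw [tsub_eq_zero_iff_le] at h
    have : ENNReal.ofReal ρ < 1 := ENNReal.ofReal_lt_one.2 hρ1
    exact absurd h this.not_ge
  have key : ∀ ε0 : ℝ, 0 < ε0 → ε0 < 1 →
      prePack u ZK ≤ ENNReal.ofReal (A * (2:ℝ) ^ (-e) * ε0 ^ q)
        * (1 - ENNReal.ofReal ρ)⁻¹ := by
    intro ε0 hε00 hε01
    refine le_trans (iInf_le_of_le ε0 (iInf_le_of_le hε00 le_rfl)) ?_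
    refine iSup_le fun x => iSup_le fun r => iSup_le fun S => iSup_le fun hxS =>
      iSup_le fun hr => iSup_le fun hrε => iSup_le fun hdisj => ?_
    set g : ℕ → ℝ≥0∞ := fun j => ENNReal.ofReal ((2 * r j) ^ u) with hgdef
    set Sk : ℕ → Set ℕ :=
      fun k => {j | j ∈ S ∧ ε0 / 2 ^ (k+1) < 2 * r j ∧ 2 * r j ≤ ε0 / 2 ^ k} with hSkdef
    have hpt : ∀ j, S.indicator g j ≤ ∑' k, (Sk k).indicator g j := by
      intro j
      by_cases hjS : j ∈ S
      · rw [Set.indicator_of_mem hjS]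
        rcases eq_or_lt_of_le (hr j hjS) with h0 | hpos
        · have hg0 : g j = 0 := by
            rw [hgdef]
            simp only [← h0, mul_zero]
            rw [Real.zero_rpow (ne_of_gt hu0)]
            simp
          rw [hg0]
          exact zero_le
        · obtain ⟨k, hk1, hk2⟩ := exists_dyadic ε0 (2 * r j) (by linarith) (hrε j hjS)
          have hmem : j ∈ Sk k := ⟨hjS, hk1, hk2⟩
          calc g j = (Sk k).indicator g j := (Set.indicator_of_mem hmem g).symm
            _ ≤ ∑' k, (Sk k).indicator g j := ENNReal.le_tsum k
      · rw [Set.indicator_of_notMem hjS]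
        exact zero_le
    have hsplit : ∑' j : S, g j ≤ ∑' k, ∑' j, (Sk k).indicator g j := by
      calc ∑' j : S, g j = ∑' j, S.indicator g j := tsum_subtype S g
        _ ≤ ∑' j, ∑' k, (Sk k).indicator g j := ENNReal.tsum_le_tsum hpt
        _ = ∑' k, ∑' j, (Sk k).indicator g j := ENNReal.tsum_comm
    have hk : ∀ k : ℕ, ∑' j, (Sk k).indicator g j
        ≤ ENNReal.ofReal (A * (ε0 / 2 ^ (k+1)) ^ e * (ε0 / 2 ^ k) ^ u) := by
      intro k
      set δk : ℝ := ε0 / 2 ^ (k+1) with hδkdef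
      have hδk0 : 0 < δk := by positivity
      have hδk1 : δk < 1 := by
        rw [hδkdef, div_lt_one (by positivity)]
        calc ε0 < 1 := hε01
          _ ≤ 2 ^ (k+1) := one_le_pow₀ (by norm_num)
      obtain ⟨G, T, hTcov, hTdiam, hGcard⟩ := hcov δk hδk0 hδk1
      have hchoice : ∀ j, j ∈ Sk k → ∃ v : Fin G, x j ∈ T v := fun j hj =>
        Set.mem_iUnion.1 (hTcov (hxS j hj.1))
      choose φ hφ using hchoice
      have hfinj : Function.Injective (fun j : ↥(Sk k) => φ j.1 j.2) := by
        rintro ⟨j, hj⟩ ⟨j', hj'⟩ hjj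
        simp only at hjj
        apply Subtype.ext
        simp only
        by_contra hne
        have hd : dist (x j) (x j') ≤ δk := by
          have h1 := hφ j hj
          have h2 := hφ j' hj'
          rw [hjj] at h1
          exact hTdiam _ _ h1 _ h2
        have hrj : δk / 2 < r j := by
          have h := hj.2.1
          rw [← hδkdef] at h
          linarith
        have hrj' : δk / 2 < r j' := by
          have h := hj'.2.1
          rw [← hδkdef] at h
          linarith
        have hdis := hdisj hj.1 hj'.1 hne
        exact hmeet (x j) (x j') (r j) (r j') (by linarith) (by linarith)
          (by linarith) hdis
      have hgb : ∀ j : ↥(Sk k), g j ≤ ENNReal.ofReal ((ε0 / 2 ^ k) ^ u) := by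
        rintro ⟨j, hj⟩
        apply ENNReal.ofReal_le_ofReal
        exact Real.rpow_le_rpow (by linarith [hr j hj.1]) hj.2.2 hu0.le
      calc ∑' j, (Sk k).indicator g j = ∑' j : ↥(Sk k), g j := (tsum_subtype _ _).symm
        _ ≤ ∑' j : ↥(Sk k), ENNReal.ofReal ((ε0 / 2 ^ k) ^ u) := ENNReal.tsum_le_tsum hgb
        _ ≤ ∑' _ : Fin G, ENNReal.ofReal ((ε0 / 2 ^ k) ^ u) :=
            ENNReal.tsum_comp_le_tsum_of_injective hfinj _
        _ = (G : ℝ≥0∞) * ENNReal.ofReal ((ε0 / 2 ^ k) ^ u) := by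
            rw [tsum_fintype, Finset.sum_const, Finset.card_univ, Fintype.card_fin,
              nsmul_eq_mul]
        _ ≤ ENNReal.ofReal (A * δk ^ e) * ENNReal.ofReal ((ε0 / 2 ^ k) ^ u) := by
            apply mul_le_mul_left
            rw [show ((G:ℝ≥0∞)) = ENNReal.ofReal (G:ℝ) from (ENNReal.ofReal_natCast G).symm]
            exact ENNReal.ofReal_le_ofReal hGcard
        _ = ENNReal.ofReal (A * (ε0 / 2 ^ (k+1)) ^ e * (ε0 / 2 ^ k) ^ u) := by
            rw [← ENNReal.ofReal_mul (by positivity)]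
    have hterm : ∀ k : ℕ, A * (ε0 / 2 ^ (k+1)) ^ e * (ε0 / 2 ^ k) ^ u
        = (A * (2:ℝ) ^ (-e) * ε0 ^ q) * ρ ^ k := by
      intro k
      have e1 : (ε0 / 2 ^ (k+1)) ^ e = ε0 ^ e * (2:ℝ) ^ (-(((k:ℝ)+1) * e)) := by
        rw [Real.div_rpow hε00.le (by positivity), ← Real.rpow_natCast 2 (k+1),
          ← Real.rpow_mul (by norm_num : (0:ℝ) ≤ 2), div_eq_mul_inv,
          ← Real.rpow_neg (by norm_num : (0:ℝ) ≤ 2)]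
        push_cast
        ring_nf
      have e2 : (ε0 / 2 ^ k) ^ u = ε0 ^ u * (2:ℝ) ^ (-((k:ℝ) * u)) := by
        rw [Real.div_rpow hε00.le (by positivity), ← Real.rpow_natCast 2 k,
          ← Real.rpow_mul (by norm_num : (0:ℝ) ≤ 2), div_eq_mul_inv,
          ← Real.rpow_neg (by norm_num : (0:ℝ) ≤ 2)]
      have e3 : ρ ^ k = (2:ℝ) ^ (-(q * (k:ℝ))) := by
        rw [hρdef, ← Real.rpow_natCast ((2:ℝ) ^ (-q)) k,
          ← Real.rpow_mul (by norm_num : (0:ℝ) ≤ 2)]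
        ring_nf
      have e4 : ε0 ^ q = ε0 ^ u * ε0 ^ e := by
        rw [hqdef, Real.rpow_add hε00]
      have e5 : (2:ℝ) ^ (-(((k:ℝ)+1) * e)) = (2:ℝ) ^ (-e) * (2:ℝ) ^ (-((k:ℝ) * e)) := by
        rw [← Real.rpow_add (by norm_num : (0:ℝ) < 2)]
        congr 1
        ring
      have e6 : (2:ℝ) ^ (-(q * (k:ℝ))) = (2:ℝ) ^ (-((k:ℝ) * e)) * (2:ℝ) ^ (-((k:ℝ) * u)) := by
        rw [← Real.rpow_add (by norm_num : (0:ℝ) < 2)]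
        congr 1
        rw [hqdef]
        ring
      rw [e1, e2, e3, e4, e5, e6]
      ring
    calc ∑' j : S, g j ≤ ∑' k, ∑' j, (Sk k).indicator g j := hsplit
      _ ≤ ∑' k, ENNReal.ofReal (A * (ε0 / 2 ^ (k+1)) ^ e * (ε0 / 2 ^ k) ^ u) :=
          ENNReal.tsum_le_tsum hk
      _ = ∑' k, ENNReal.ofReal ((A * (2:ℝ) ^ (-e) * ε0 ^ q) * ρ ^ k) := by
          congr 1
          funext k
          rw [hterm k]
      _ = ENNReal.ofReal (A * (2:ℝ) ^ (-e) * ε0 ^ q) * ∑' k, ENNReal.ofReal ρ ^ k := by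
          rw [← ENNReal.tsum_mul_left]
          congr 1
          funext k
          rw [← ENNReal.ofReal_pow hρ0, ← ENNReal.ofReal_mul (by positivity)]
      _ = ENNReal.ofReal (A * (2:ℝ) ^ (-e) * ε0 ^ q) * (1 - ENNReal.ofReal ρ)⁻¹ := by
          rw [ENNReal.tsum_geometric]
  have h1 : Filter.Tendsto (fun ε0 : ℝ => ε0 ^ q) (nhdsWithin 0 (Set.Ioi 0)) (nhds 0) := by
    have hc : ContinuousAt (fun z : ℝ => z ^ q) 0 :=
      Real.continuousAt_rpow_const 0 q (Or.inr (by linarith))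
    have h := hc.tendsto
    rw [Real.zero_rpow (by linarith : q ≠ 0)] at h
    exact h.mono_left nhdsWithin_le_nhds
  have h2 : Filter.Tendsto (fun ε0 : ℝ => ENNReal.ofReal (A * (2:ℝ) ^ (-e) * ε0 ^ q))
      (nhdsWithin 0 (Set.Ioi 0)) (nhds 0) := by
    have hm := h1.const_mul (A * (2:ℝ) ^ (-e))
    rw [mul_zero] at hm
    have h := (ENNReal.continuous_ofReal.tendsto 0).comp hm
    simpa [Function.comp_def] using h
  have hlim : Filter.Tendsto
      (fun ε0 : ℝ => ENNReal.ofReal (A * (2:ℝ) ^ (-e) * ε0 ^ q) * (1 - ENNReal.ofReal ρ)⁻¹)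
      (nhdsWithin 0 (Set.Ioi 0)) (nhds 0) := by
    have := ENNReal.Tendsto.mul_const h2 (Or.inr hgeo_ne)
    simpa using this
  have hfin : prePack u ZK ≤ 0 := by
    refine ge_of_tendsto hlim ?_
    filter_upwards [Ioo_mem_nhdsGT_of_mem (by norm_num : (0:ℝ) ∈ Set.Ico (0:ℝ) 1)]
      with ε0 hε0
    exact key ε0 hε0.1 hε0.2
  exact le_antisymm (by simpa using hfin) zero_le


set_option maxHeartbeats 1000000 in
/-- Observation 8: if the total `μ`-measure of generation-`M` product cylinders meeting `Z`
is at most `C B^M t^{-Mε}` for all `M > N`, then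
`dim_P (Z ∩ K) ≤ s − (ε − log B / log t)/(a_1 + b_1)`. -/
theorem stmt_17 (m n : ℕ) (hm : 0 < m) (hn : 0 < n)
    (a : Fin m → ℝ) (b : Fin n → ℝ)
    (ha : Antitone a) (hb : Antitone b)
    (hapos : ∀ i, 0 < a i) (hbpos : ∀ j, 0 < b j)
    (hasum : ∑ i, a i = 1) (hbsum : ∑ j, b j = 1)
    (E : Fin m → Fin n → Type) [∀ i j, Fintype (E i j)] [∀ i j, Nonempty (E i j)]
    (hcard : ∀ i j, 2 ≤ Fintype.card (E i j))
    (c : Fin m → Fin n → ℝ) (hc0 : ∀ i j, 0 < c i j) (hc1 : ∀ i j, c i j < 1)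
    (w : ∀ i j, E i j → ℝ)
    (hOSC : ∀ i j, ∃ U : Set ℝ, IsOpen U ∧ U.Nonempty ∧
      (∀ e : E i j, (fun x => c i j * x + w i j e) '' U ⊆ U) ∧
      ∀ e e' : E i j, e ≠ e' →
        Disjoint ((fun x => c i j * x + w i j e) '' U) ((fun x => c i j * x + w i j e') '' U))
    (K : Fin m → Fin n → Set ℝ)
    (hK : ∀ i j, K i j = Set.range fun bs : ℕ → E i j => ∑' k : ℕ, (c i j) ^ k * w i j (bs k))
    (t : ℝ) (ht : 1 < t) (ε B C : ℝ) (hε : 0 < ε) (hB : 0 < B) (hC : 0 < C) (N : ℕ)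
    (NM : ℕ → Fin m → Fin n → ℕ)
    (hNM : ∀ M i j, (c i j) ^ (NM M i j + 1) < t ^ (-(M : ℝ) * (a i + b j)) ∧
      t ^ (-(M : ℝ) * (a i + b j)) ≤ (c i j) ^ (NM M i j))
    (μ : Measure (Fin m → Fin n → ℝ))
    (hμcyl : ∀ (M : ℕ) (ω : ∀ i j, Fin (NM M i j) → E i j),
      μ {θ | ∀ i j, θ i j ∈ cylImage (c i j) (w i j) (K i j) (List.ofFn (ω i j))}
        = ∏ i, ∏ j, ((Fintype.card (E i j) : ℝ≥0∞))⁻¹ ^ NM M i j)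
    (Z : Set (Fin m → Fin n → ℝ))
    (hcount : ∀ M : ℕ, N < M →
      ∑ ω : ∀ i j, Fin (NM M i j) → E i j,
        (if ({θ : Fin m → Fin n → ℝ |
              ∀ i j, θ i j ∈ cylImage (c i j) (w i j) (K i j) (List.ofFn (ω i j))} ∩ Z).Nonempty
          then μ {θ | ∀ i j, θ i j ∈ cylImage (c i j) (w i j) (K i j) (List.ofFn (ω i j))}
          else 0)
        ≤ ENNReal.ofReal (C * B ^ M * t ^ (-(M : ℝ) * ε))) :
    dimP (Z ∩ {θ : Fin m → Fin n → ℝ | ∀ i j, θ i j ∈ K i j}) ≤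
      ENNReal.ofReal
        ((∑ i, ∑ j, (-Real.log (Fintype.card (E i j)) / Real.log (c i j)))
          - (1 / (a ⟨0, hm⟩ + b ⟨0, hn⟩)) * (ε - Real.log B / Real.log t)) := by
  classical
  have hα : 0 < a ⟨0, hm⟩ + b ⟨0, hn⟩ := add_pos (hapos _) (hbpos _)
  obtain ⟨A, hA0, hcov⟩ := cover_lemma m n hm hn a b ha hb E hcard c hc0 hc1 w K hK
    t ht ε B C hB hC N hα NM hNM μ hμcyl Z hcount
  set ZK := Z ∩ {θ : Fin m → Fin n → ℝ | ∀ i j, θ i j ∈ K i j} with hZKdef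
  set dd : ℝ := (∑ i, ∑ j, (-Real.log (Fintype.card (E i j)) / Real.log (c i j)))
      - (1 / (a ⟨0, hm⟩ + b ⟨0, hn⟩)) * (ε - Real.log B / Real.log t) with hdddef
  set e : ℝ := (ε - Real.log B / Real.log t) / (a ⟨0, hm⟩ + b ⟨0, hn⟩)
      - ∑ i, ∑ j, (-Real.log (Fintype.card (E i j)) / Real.log (c i j)) with hedef
  have hede : e = -dd := by
    rw [hedef, hdddef]
    ring
  have hmeet : ∀ (x1 x2 : Fin m → Fin n → ℝ) (r1 r2 : ℝ), 0 < r1 → 0 < r2 →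
      dist x1 x2 ≤ r1 + r2 →
      ¬ Disjoint (Metric.closedBall x1 r1) (Metric.closedBall x2 r2) := by
    intro x1 x2 r1 r2 h1 h2 hd
    rw [Set.not_disjoint_iff]
    have hr12 : 0 < r1 + r2 := by linarith
    have hcoord : ∀ i j, |x1 i j - x2 i j| ≤ r1 + r2 := by
      intro i j
      have h1' : dist (x1 i j) (x2 i j) ≤ dist (x1 i) (x2 i) := dist_le_pi_dist _ _ j
      have h2' : dist (x1 i) (x2 i) ≤ dist x1 x2 := dist_le_pi_dist x1 x2 i
      rw [Real.dist_eq] at h1'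
      linarith
    refine ⟨fun i j => x1 i j + (r1 / (r1 + r2)) * (x2 i j - x1 i j), ?_, ?_⟩
    · rw [Metric.mem_closedBall, dist_pi_le_iff h1.le]
      intro i
      rw [dist_pi_le_iff h1.le]
      intro j
      rw [Real.dist_eq]
      rw [show x1 i j + r1 / (r1 + r2) * (x2 i j - x1 i j) - x1 i j
          = r1 / (r1 + r2) * (x2 i j - x1 i j) from by ring]
      rw [abs_mul, abs_of_nonneg (by positivity)]
      calc r1 / (r1 + r2) * |x2 i j - x1 i j| ≤ r1 / (r1 + r2) * (r1 + r2) := by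
            apply mul_le_mul_of_nonneg_left _ (by positivity)
            rw [abs_sub_comm]
            exact hcoord i j
        _ = r1 := by field_simp
    · rw [Metric.mem_closedBall, dist_pi_le_iff h2.le]
      intro i
      rw [dist_pi_le_iff h2.le]
      intro j
      rw [Real.dist_eq]
      rw [show x1 i j + r1 / (r1 + r2) * (x2 i j - x1 i j) - x2 i j
          = -((r2 / (r1 + r2)) * (x2 i j - x1 i j)) from by field_simp; ring]
      rw [abs_neg, abs_mul, abs_of_nonneg (by positivity)]
      calc r2 / (r1 + r2) * |x2 i j - x1 i j| ≤ r2 / (r1 + r2) * (r1 + r2) := by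
            apply mul_le_mul_of_nonneg_left _ (by positivity)
            rw [abs_sub_comm]
            exact hcoord i j
        _ = r2 := by field_simp
  have hpack : ∀ u : ℝ≥0, 0 < (u:ℝ) → dd < (u:ℝ) → packMeasure (u:ℝ) ZK = 0 := by
    intro u h1 h2
    have hpre : prePack (u:ℝ) ZK = 0 :=
      prePack_zero ZK A e hA0 hmeet hcov (u:ℝ) h1 (by rw [hede]; linarith)
    apply le_antisymm _ zero_le
    refine le_trans (iInf_le_of_le (fun _ => ZK)
      (iInf_le_of_le (fun θ hθ => Set.mem_iUnion.2 ⟨0, hθ⟩) le_rfl)) ?_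
    simp only [hpre]
    simp
  refine le_of_forall_gt_imp_ge_of_dense ?_
  intro bb hbb
  obtain ⟨v, hv1, hv2⟩ := ENNReal.lt_iff_exists_nnreal_btwn.1 hbb
  have hv0 : 0 < v := by
    have h0 : (0:ℝ≥0∞) < (v:ℝ≥0∞) := lt_of_le_of_lt zero_le hv1
    exact_mod_cast h0
  have hv0' : 0 < (v:ℝ) := hv0
  have hvd : dd < (v:ℝ) := by
    rcases lt_or_ge dd 0 with h | h
    · linarith
    · rw [← ENNReal.ofReal_coe_nnreal] at hv1
      exact (ENNReal.ofReal_lt_ofReal_iff hv0').1 hv1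
  calc dimP ZK ≤ (v : ℝ≥0∞) := iInf₂_le v (hpack v hv0' hvd)
    _ ≤ bb := hv2.le
end
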